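/- arXiv:1309.5028 — 4 statements merged into one kernel-verified Lean document; each statement's English description precedes it below -/
import Mathlib

section
/- Let q ∈ L¹(ℝ^d) be nonnegative a.e. with supp q ⊂ B_ρ(0) for some ρ > 0. Then for every R > 0 and every measurable function u: ∫_{B_R}∫_{B_R} (u(x)−u(y))² (q∗q)(x−y) dy dx ≤ 4‖q‖_{L¹} ∫_{B_{R+ρ}}∫_{B_{R+ρ}} (u(x)−u(y))² q(x−y) dy dx. -/
open MeasureTheory Metric
open scoped ENNReal NNReal

private abbrev Spc (d : ℕ) := EuclideanSpace ℝ (Fin d)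

set_option maxHeartbeats 1000000 in
private theorem aux_conv {d : ℕ} (g : Spc d → ℝ≥0∞) (hgm : Measurable g)
    {ρ : ℝ} (hρ : 0 < ρ) (hg0 : ∀ z ∉ ball (0 : Spc d) ρ, g z = 0)
    {R : ℝ} (u : Spc d → ℝ) (hu : Measurable u) :
    (∫⁻ x in ball (0 : Spc d) R, ∫⁻ y in ball (0 : Spc d) R,
        ENNReal.ofReal ((u x - u y) ^ 2) * ∫⁻ z, g (x - z) * g (z - y)) ≤
      4 * (∫⁻ z, g z) *
        ∫⁻ x in ball (0 : Spc d) (R + ρ), ∫⁻ y in ball (0 : Spc d) (R + ρ),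
          ENNReal.ofReal ((u x - u y) ^ 2) * g (x - y) := by
  classical
  set B : Set (Spc d) := ball 0 R with hB
  set B' : Set (Spc d) := ball 0 (R + ρ) with hB'
  have hBB' : B ⊆ B' := ball_subset_ball (by linarith)
  set U : Spc d → Spc d → ℝ≥0∞ := fun x y => ENNReal.ofReal ((u x - u y) ^ 2) with hU
  have hUm : Measurable (fun p : Spc d × Spc d => U p.1 p.2) := by
    apply Measurable.ennreal_ofReal
    exact ((hu.comp measurable_fst).sub (hu.comp measurable_snd)).pow_const 2
  set N : ℝ≥0∞ := ∫⁻ z, g z with hN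
  set D : ℝ≥0∞ := ∫⁻ x in B', ∫⁻ y in B', U x y * g (x - y) with hD
  -- helper measurabilities
  have hsub : Measurable (fun p : Spc d × Spc d => g (p.1 - p.2)) :=
    hgm.comp (measurable_fst.sub measurable_snd)
  -- key pointwise inequality
  have keyU : ∀ x y z : Spc d, U x y ≤ 2 * U x z + 2 * U z y := by
    intro x y z
    have h1 : (u x - u y) ^ 2 ≤ 2 * (u x - u z) ^ 2 + 2 * (u z - u y) ^ 2 := by nlinarith [sq_nonneg (u x + u y - 2 * u z)]
    calc U x y ≤ ENNReal.ofReal (2 * (u x - u z) ^ 2 + 2 * (u z - u y) ^ 2) :=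
          ENNReal.ofReal_le_ofReal h1
      _ = 2 * U x z + 2 * U z y := by
          rw [ENNReal.ofReal_add (by positivity) (by positivity),
            ENNReal.ofReal_mul (by norm_num), ENNReal.ofReal_mul (by norm_num)]
          norm_num [hU]
  -- bound on inner y-integrals of shifted g
  have hyN : ∀ z : Spc d, (∫⁻ y in B, g (z - y)) ≤ N := by
    intro z
    refine (setLIntegral_le_lintegral _ _).trans (le_of_eq ?_)
    exact (Measure.measurePreserving_sub_left volume z).lintegral_comp hgm
  have hxN : ∀ z : Spc d, (∫⁻ x in B, g (x - z)) ≤ N := by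
    intro z
    refine (setLIntegral_le_lintegral _ _).trans (le_of_eq ?_)
    exact (measurePreserving_sub_right volume z).lintegral_comp hgm
  -- S₁ bound
  have hS1 : (∫⁻ x in B, ∫⁻ y in B, ∫⁻ z, U x z * (g (x - z) * g (z - y))) ≤ D * N := by
    have step1 : ∀ x ∈ B, (∫⁻ y in B, ∫⁻ z, U x z * (g (x - z) * g (z - y)))
        ≤ (∫⁻ z in B', U x z * g (x - z)) * N := by
      intro x hx
      have swap1 : (∫⁻ y in B, ∫⁻ z, U x z * (g (x - z) * g (z - y)))
          = ∫⁻ z, ∫⁻ y in B, U x z * (g (x - z) * g (z - y)) := by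
        refine lintegral_lintegral_swap ?_
        apply Measurable.aemeasurable
        exact ((hUm.comp (measurable_const.prodMk measurable_snd)).mul
          ((hgm.comp (measurable_const.sub measurable_snd)).mul
            (hgm.comp (measurable_snd.sub measurable_fst))))
      rw [swap1]
      have : ∀ z : Spc d, (∫⁻ y in B, U x z * (g (x - z) * g (z - y)))
          = (U x z * g (x - z)) * ∫⁻ y in B, g (z - y) := by
        intro z
        rw [← lintegral_const_mul _ (show Measurable fun y : Spc d => g (z - y) by fun_prop)]
        congr 1 with y
        ring
      rw [lintegral_congr this]
      calc (∫⁻ z, (U x z * g (x - z)) * ∫⁻ y in B, g (z - y))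
          ≤ ∫⁻ z, (U x z * g (x - z)) * N :=
            lintegral_mono fun z => mul_le_mul_right (hyN z) _
        _ = (∫⁻ z, U x z * g (x - z)) * N := by
            rw [lintegral_mul_const _ (show Measurable fun z : Spc d => U x z * g (x - z) by
              exact (hUm.comp (measurable_const.prodMk measurable_id)).mul (by fun_prop))]
        _ = (∫⁻ z in B', U x z * g (x - z)) * N := by
            rw [setLIntegral_eq_of_support_subset]
            intro z hz
            simp only [Function.mem_support] at hz
            have hgz : g (x - z) ≠ 0 := fun h => hz (by rw [h, mul_zero])
            have hxz : x - z ∈ ball (0 : Spc d) ρ := by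
              by_contra h; exact hgz (hg0 _ h)
            rw [hB', mem_ball_zero_iff]
            rw [mem_ball_zero_iff] at hxz
            rw [hB, mem_ball_zero_iff] at hx
            calc ‖z‖ = ‖x - (x - z)‖ := by congr 1; abel
              _ ≤ ‖x‖ + ‖x - z‖ := norm_sub_le _ _
              _ < R + ρ := by linarith
    calc (∫⁻ x in B, ∫⁻ y in B, ∫⁻ z, U x z * (g (x - z) * g (z - y)))
        ≤ ∫⁻ x in B, (∫⁻ z in B', U x z * g (x - z)) * N := by
          refine setLIntegral_mono ?_ step1
          apply Measurable.mul_const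
          apply Measurable.lintegral_prod_right
          exact hUm.mul hsub
      _ ≤ ∫⁻ x in B', (∫⁻ z in B', U x z * g (x - z)) * N := lintegral_mono_set hBB'
      _ = (∫⁻ x in B', ∫⁻ z in B', U x z * g (x - z)) * N := by
          rw [lintegral_mul_const]
          apply Measurable.lintegral_prod_right
          exact hUm.mul hsub
      _ = D * N := rfl
  -- S₂ bound
  have hS2 : (∫⁻ x in B, ∫⁻ y in B, ∫⁻ z, U z y * (g (x - z) * g (z - y))) ≤ N * D := by
    set H : Spc d → ℝ≥0∞ := fun z => ∫⁻ y in B, U z y * g (z - y) with hH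
    have hHm : Measurable H := by
      apply Measurable.lintegral_prod_right
      exact hUm.mul hsub
    have step1 : ∀ x : Spc d, (∫⁻ y in B, ∫⁻ z, U z y * (g (x - z) * g (z - y)))
        = ∫⁻ z, g (x - z) * H z := by
      intro x
      rw [lintegral_lintegral_swap (Measurable.aemeasurable (by
        exact ((hUm.comp (measurable_snd.prodMk measurable_fst)).mul
          ((hgm.comp (measurable_const.sub measurable_snd)).mul
            (hgm.comp (measurable_snd.sub measurable_fst))))))]
      refine lintegral_congr fun z => ?_
      rw [hH, ← lintegral_const_mul _ (show Measurable fun y : Spc d => U z y * g (z - y) from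
        (hUm.comp (measurable_const.prodMk measurable_id)).mul (by fun_prop))]
      exact lintegral_congr fun y => by ring
    calc (∫⁻ x in B, ∫⁻ y in B, ∫⁻ z, U z y * (g (x - z) * g (z - y)))
        = ∫⁻ x in B, ∫⁻ z, g (x - z) * H z := lintegral_congr fun x => step1 x
      _ = ∫⁻ z, ∫⁻ x in B, g (x - z) * H z := by
          refine lintegral_lintegral_swap (Measurable.aemeasurable ?_)
          exact hsub.mul (hHm.comp measurable_snd)
      _ = ∫⁻ z, (∫⁻ x in B, g (x - z)) * H z := by
          refine lintegral_congr fun z => ?_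
          exact lintegral_mul_const _ (by fun_prop)
      _ ≤ ∫⁻ z, N * H z := lintegral_mono fun z => mul_le_mul_left (hxN z) _
      _ = N * ∫⁻ z, H z := lintegral_const_mul _ hHm
      _ = N * ∫⁻ z in B', H z := by
          rw [setLIntegral_eq_of_support_subset]
          intro z hz
          simp only [Function.mem_support] at hz
          by_contra hzB'
          apply hz
          have hzero : ∀ y ∈ B, U z y * g (z - y) = 0 := by
            intro y hy
            have hgy : g (z - y) = 0 := by
              apply hg0
              simp only [mem_ball_zero_iff, not_lt]
              simp only [hB, mem_ball_zero_iff] at hy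
              simp only [hB', mem_ball_zero_iff, not_lt] at hzB'
              have := norm_sub_norm_le z y
              linarith
            rw [hgy, mul_zero]
          calc H z = ∫⁻ y in B, 0 :=
              setLIntegral_congr_fun measurableSet_ball hzero
            _ = 0 := lintegral_zero
      _ ≤ N * ∫⁻ z in B', ∫⁻ y in B', U z y * g (z - y) := by
          refine mul_le_mul_right (lintegral_mono fun z => ?_) N
          exact lintegral_mono_set hBB'
      _ = N * D := rfl
  -- assembly
  have hAm : Measurable fun q : (Spc d × Spc d) × Spc d =>
      U q.1.1 q.2 * (g (q.1.1 - q.2) * g (q.2 - q.1.2)) := by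
    simp only [hU]
    fun_prop
  have hBm : Measurable fun q : (Spc d × Spc d) × Spc d =>
      U q.2 q.1.2 * (g (q.1.1 - q.2) * g (q.2 - q.1.2)) := by
    simp only [hU]
    fun_prop
  have hAz : ∀ x y : Spc d, Measurable fun z => U x z * (g (x - z) * g (z - y)) := by
    intro x y
    simp only [hU]; fun_prop
  have hBz : ∀ x y : Spc d, Measurable fun z => U z y * (g (x - z) * g (z - y)) := by
    intro x y
    simp only [hU]; fun_prop
  have hAi : Measurable fun p : Spc d × Spc d => ∫⁻ z, U p.1 z * (g (p.1 - z) * g (z - p.2)) :=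
    Measurable.lintegral_prod_right hAm
  have hBi : Measurable fun p : Spc d × Spc d => ∫⁻ z, U z p.2 * (g (p.1 - z) * g (z - p.2)) :=
    Measurable.lintegral_prod_right hBm
  have hAy : ∀ x : Spc d, Measurable fun y => ∫⁻ z, U x z * (g (x - z) * g (z - y)) := by
    intro x
    exact Measurable.lintegral_prod_right
      (f := fun y z : Spc d => U x z * (g (x - z) * g (z - y)))
      (by simp only [hU, Function.uncurry]; fun_prop)
  have hBy : ∀ x : Spc d, Measurable fun y => ∫⁻ z, U z y * (g (x - z) * g (z - y)) := by
    intro x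
    exact Measurable.lintegral_prod_right
      (f := fun y z : Spc d => U z y * (g (x - z) * g (z - y)))
      (by simp only [hU, Function.uncurry]; fun_prop)
  calc (∫⁻ x in B, ∫⁻ y in B, U x y * ∫⁻ z, g (x - z) * g (z - y))
      = ∫⁻ x in B, ∫⁻ y in B, ∫⁻ z, U x y * (g (x - z) * g (z - y)) := by
        refine lintegral_congr fun x => lintegral_congr fun y => ?_
        rw [lintegral_const_mul _ (show Measurable fun z : Spc d => g (x - z) * g (z - y)
          by fun_prop)]
    _ ≤ ∫⁻ x in B, ∫⁻ y in B, ∫⁻ z,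
          (2 * (U x z * (g (x - z) * g (z - y))) + 2 * (U z y * (g (x - z) * g (z - y)))) := by
        refine lintegral_mono fun x => lintegral_mono fun y => lintegral_mono fun z => ?_
        calc U x y * (g (x - z) * g (z - y))
            ≤ (2 * U x z + 2 * U z y) * (g (x - z) * g (z - y)) :=
              mul_le_mul_left (keyU x y z) _
          _ = _ := by ring
    _ = ∫⁻ x in B, ∫⁻ y in B,
          (2 * ∫⁻ z, U x z * (g (x - z) * g (z - y))) +
            (2 * ∫⁻ z, U z y * (g (x - z) * g (z - y))) := by
        refine lintegral_congr fun x => lintegral_congr fun y => ?_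
        rw [lintegral_add_left ((hAz x y).const_mul 2),
          lintegral_const_mul _ (hAz x y), lintegral_const_mul _ (hBz x y)]
    _ = ∫⁻ x in B,
          (2 * ∫⁻ y in B, ∫⁻ z, U x z * (g (x - z) * g (z - y))) +
            (2 * ∫⁻ y in B, ∫⁻ z, U z y * (g (x - z) * g (z - y))) := by
        refine lintegral_congr fun x => ?_
        rw [lintegral_add_left ((hAy x).const_mul 2),
          lintegral_const_mul _ (hAy x), lintegral_const_mul _ (hBy x)]
    _ = (2 * ∫⁻ x in B, ∫⁻ y in B, ∫⁻ z, U x z * (g (x - z) * g (z - y))) +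
          (2 * ∫⁻ x in B, ∫⁻ y in B, ∫⁻ z, U z y * (g (x - z) * g (z - y))) := by
        have h1 : Measurable fun x : Spc d =>
            ∫⁻ y in B, ∫⁻ z, U x z * (g (x - z) * g (z - y)) :=
          Measurable.lintegral_prod_right hAi
        have h2 : Measurable fun x : Spc d =>
            ∫⁻ y in B, ∫⁻ z, U z y * (g (x - z) * g (z - y)) :=
          Measurable.lintegral_prod_right hBi
        rw [lintegral_add_left (h1.const_mul 2),
          lintegral_const_mul _ h1, lintegral_const_mul _ h2]
    _ ≤ 2 * (D * N) + 2 * (N * D) :=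
        add_le_add (mul_le_mul_right hS1 2) (mul_le_mul_right hS2 2)
    _ = 4 * N * D := by ring

set_option maxHeartbeats 1000000 in
/-- Convolution lemma (Lemma `faltung-L1-kern`): if `q ∈ L¹(ℝ^d)` is a.e. nonnegative
with support in `B_ρ(0)`, then for every `R > 0` and every measurable `u`,
`∬_{B_R×B_R} (u(x)−u(y))² (q∗q)(x−y) ≤ 4‖q‖_{L¹} ∬_{B_{R+ρ}×B_{R+ρ}} (u(x)−u(y))² q(x−y)`. -/
theorem stmt_3 {d : ℕ} (q : EuclideanSpace ℝ (Fin d) → ℝ)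
    (hq : Integrable q) (hq0 : ∀ᵐ x ∂(volume : Measure (EuclideanSpace ℝ (Fin d))), 0 ≤ q x)
    (ρ : ℝ) (hρ : 0 < ρ) (hsupp : Function.support q ⊆ ball 0 ρ)
    (R : ℝ) (hR : 0 < R)
    (u : EuclideanSpace ℝ (Fin d) → ℝ) (hu : Measurable u) :
    (∫⁻ x in ball (0 : EuclideanSpace ℝ (Fin d)) R,
        ∫⁻ y in ball (0 : EuclideanSpace ℝ (Fin d)) R,
          ENNReal.ofReal ((u x - u y) ^ 2 * ∫ t, q t * q (x - y - t))) ≤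
      4 * ENNReal.ofReal (∫ z, q z) *
        ∫⁻ x in ball (0 : EuclideanSpace ℝ (Fin d)) (R + ρ),
          ∫⁻ y in ball (0 : EuclideanSpace ℝ (Fin d)) (R + ρ),
            ENNReal.ofReal ((u x - u y) ^ 2 * q (x - y)) := by
  classical
  have hqae : AEMeasurable q (volume : Measure (EuclideanSpace ℝ (Fin d))) :=
    hq.aestronglyMeasurable.aemeasurable
  set g : EuclideanSpace ℝ (Fin d) → ℝ≥0∞ :=
    fun z => if z ∈ ball (0 : EuclideanSpace ℝ (Fin d)) ρ then ENNReal.ofReal (hqae.mk q z)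
      else 0 with hgdef
  have hgm : Measurable g :=
    Measurable.ite measurableSet_ball hqae.measurable_mk.ennreal_ofReal measurable_const
  have hg0 : ∀ z ∉ ball (0 : EuclideanSpace ℝ (Fin d)) ρ, g z = 0 := fun z hz => if_neg hz
  have hgae : ∀ᵐ z ∂(volume : Measure (EuclideanSpace ℝ (Fin d))),
      ENNReal.ofReal (q z) = g z := by
    filter_upwards [hqae.ae_eq_mk] with z hz
    by_cases h : z ∈ ball (0 : EuclideanSpace ℝ (Fin d)) ρ
    · rw [hz]; exact (if_pos h).symm
    · have hqz : q z = 0 := by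
        by_contra hne
        exact h (hsupp hne)
      rw [hqz, ENNReal.ofReal_zero]
      exact (if_neg h).symm
  have hshift : ∀ c : EuclideanSpace ℝ (Fin d),
      ∀ᵐ t ∂(volume : Measure (EuclideanSpace ℝ (Fin d))),
        ENNReal.ofReal (q (c - t)) = g (c - t) ∧ 0 ≤ q (c - t) := by
    intro c
    have h := (Measure.measurePreserving_sub_left
      (volume : Measure (EuclideanSpace ℝ (Fin d))) c).quasiMeasurePreserving.tendsto_ae
    exact h.eventually (hgae.and hq0)
  have key : ∀ x y : EuclideanSpace ℝ (Fin d),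
      ENNReal.ofReal ((u x - u y) ^ 2 * ∫ t, q t * q (x - y - t)) ≤
        ENNReal.ofReal ((u x - u y) ^ 2) * ∫⁻ z, g (x - z) * g (z - y) := by
    intro x y
    rw [ENNReal.ofReal_mul (sq_nonneg _)]
    refine mul_le_mul_right ?_ _
    have hsub1 : (∫⁻ z, g (x - z) * g (z - y)) = ∫⁻ t, g t * g (x - y - t) := by
      have h1 : (∫⁻ z, g (x - z) * g (z - y))
          = ∫⁻ z, (fun t => g t * g (x - y - t)) (x - z) := by
        refine lintegral_congr fun z => ?_
        simp only
        congr 2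
        abel
      rw [h1]
      exact (Measure.measurePreserving_sub_left volume x).lintegral_comp
        (f := fun t => g t * g (x - y - t))
        (hgm.mul (show Measurable fun t : EuclideanSpace ℝ (Fin d) => g (x - y - t) by fun_prop))
    rw [hsub1]
    by_cases hint : Integrable (fun t => q t * q (x - y - t)) volume
    · have hnn : ∀ᵐ t ∂(volume : Measure (EuclideanSpace ℝ (Fin d))),
          0 ≤ q t * q (x - y - t) := by
        filter_upwards [hq0, hshift (x - y)] with t h1 h2
        exact mul_nonneg h1 h2.2
      rw [MeasureTheory.ofReal_integral_eq_lintegral_ofReal hint hnn]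
      refine le_of_eq (lintegral_congr_ae ?_)
      filter_upwards [hq0, hgae, hshift (x - y)] with t h1 h2 h3
      rw [ENNReal.ofReal_mul h1, h2, h3.1]
    · rw [integral_undef hint]
      simp
  have hRHS : ∀ x : EuclideanSpace ℝ (Fin d),
      (∫⁻ y in ball (0 : EuclideanSpace ℝ (Fin d)) (R + ρ),
        ENNReal.ofReal ((u x - u y) ^ 2 * q (x - y))) =
      ∫⁻ y in ball (0 : EuclideanSpace ℝ (Fin d)) (R + ρ),
        ENNReal.ofReal ((u x - u y) ^ 2) * g (x - y) := by
    intro x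
    refine lintegral_congr_ae (ae_restrict_of_ae ?_)
    filter_upwards [hshift x] with y hy
    rw [ENNReal.ofReal_mul (sq_nonneg _), hy.1]
  have hNg : ENNReal.ofReal (∫ z, q z) = ∫⁻ z, g z := by
    rw [MeasureTheory.ofReal_integral_eq_lintegral_ofReal hq hq0]
    exact lintegral_congr_ae hgae
  calc (∫⁻ x in ball (0 : EuclideanSpace ℝ (Fin d)) R,
        ∫⁻ y in ball (0 : EuclideanSpace ℝ (Fin d)) R,
          ENNReal.ofReal ((u x - u y) ^ 2 * ∫ t, q t * q (x - y - t)))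
      ≤ ∫⁻ x in ball (0 : EuclideanSpace ℝ (Fin d)) R,
          ∫⁻ y in ball (0 : EuclideanSpace ℝ (Fin d)) R,
            ENNReal.ofReal ((u x - u y) ^ 2) * ∫⁻ z, g (x - z) * g (z - y) :=
        lintegral_mono fun x => lintegral_mono fun y => key x y
    _ ≤ 4 * (∫⁻ z, g z) *
          ∫⁻ x in ball (0 : EuclideanSpace ℝ (Fin d)) (R + ρ),
            ∫⁻ y in ball (0 : EuclideanSpace ℝ (Fin d)) (R + ρ),
              ENNReal.ofReal ((u x - u y) ^ 2) * g (x - y) :=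
        aux_conv g hgm hρ hg0 u hu
    _ = 4 * ENNReal.ofReal (∫ z, q z) *
          ∫⁻ x in ball (0 : EuclideanSpace ℝ (Fin d)) (R + ρ),
            ∫⁻ y in ball (0 : EuclideanSpace ℝ (Fin d)) (R + ρ),
              ENNReal.ofReal ((u x - u y) ^ 2 * q (x - y)) := by
        rw [hNg]
        congr 1
        exact (lintegral_congr fun x => (hRHS x).symm)
end

section
/- Let Ω = B₁(0) ⊂ ℝ^d, α ∈ (0,2), k(x,y) = |x−y|^{−d−α}, and for β ∈ ℝ define g(x) = (|x|−1)^β for 1 ≤ |x| ≤ 2 and g(x) = 0 otherwise. Then ∬_{B₁ × ℝ^d} (g(x)−g(y))² |x−y|^{−d−α} dy dx < ∞ if and only if β > (α−1)/2. -/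
open MeasureTheory Metric
open scoped ENNReal

open Set in
private lemma polar_lintegral {E : Type*} [NormedAddCommGroup E] [NormedSpace ℝ E]
    [MeasurableSpace E] [BorelSpace E] [FiniteDimensional ℝ E] [Nontrivial E]
    (μ : Measure E) [μ.IsAddHaarMeasure] (f : ℝ → ℝ≥0∞) (hf : Measurable f) :
    ∫⁻ x, f ‖x‖ ∂μ = μ.toSphere Set.univ *
      ∫⁻ r in Set.Ioi (0:ℝ), ENNReal.ofReal (r ^ (Module.finrank ℝ E - 1)) * f r := by
  have h1 : ∫⁻ x, f ‖x‖ ∂μ = ∫⁻ x in ({0}ᶜ : Set E), f ‖x‖ ∂μ := by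
    rw [restrict_compl_singleton]
  rw [h1, ← lintegral_subtype_comap (measurableSet_singleton (0:E)).compl (fun x => f ‖x‖)]
  have h2 := (μ.measurePreserving_homeomorphUnitSphereProd).lintegral_comp_emb
    (Homeomorph.measurableEmbedding _) (fun p : sphere (0:E) 1 × Ioi (0:ℝ) => f p.2)
  simp only [homeomorphUnitSphereProd_apply_snd_coe] at h2
  rw [h2]
  have hm : Measurable (fun z : sphere (0:E) 1 × Ioi (0:ℝ) => f z.2) :=
    hf.comp (measurable_subtype_coe.comp measurable_snd)
  rw [lintegral_prod _ hm.aemeasurable]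
  simp only [lintegral_const]
  have hg : Measurable (fun r : Ioi (0:ℝ) => f r) := hf.comp measurable_subtype_coe
  rw [Measure.volumeIoiPow,
    lintegral_withDensity_eq_lintegral_mul _ ((measurable_subtype_coe.pow_const _).ennreal_ofReal)
      hg]
  simp only [Pi.mul_apply]
  rw [lintegral_subtype_comap measurableSet_Ioi
    (fun r : ℝ => ENNReal.ofReal (r ^ (Module.finrank ℝ E - 1)) * f r), mul_comm]

open Set in
private lemma tail_lint {α : ℝ} (hα : 0 < α) {t : ℝ} (ht : 0 < t) :
    ∫⁻ r in Ioi t, ENNReal.ofReal (r ^ (-1 - α)) = ENNReal.ofReal (t ^ (-α) / α) := by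
  have hnn : 0 ≤ᵐ[volume.restrict (Ioi t)] fun r : ℝ => r ^ (-1 - α) := by
    filter_upwards [ae_restrict_mem measurableSet_Ioi] with r hr
    exact Real.rpow_nonneg (le_of_lt (ht.trans hr)) _
  rw [← ofReal_integral_eq_lintegral_ofReal
    (integrableOn_Ioi_rpow_of_lt (by linarith) ht) hnn]
  rw [integral_Ioi_rpow_of_lt (by linarith) ht]
  congr 1
  have h1 : -1 - α + 1 = -α := by ring
  rw [h1]
  rw [div_eq_div_iff (by linarith) (by linarith)]
  ring

open Set in
private lemma oneD_iff (p : ℝ) :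
    (∫⁻ s in Ioo (0:ℝ) 1, ENNReal.ofReal (s ^ p)) < ⊤ ↔ -1 < p := by
  have hmeas : AEStronglyMeasurable (fun s : ℝ => s ^ p) (volume.restrict (Ioo 0 1)) :=
    (by fun_prop : Measurable fun s : ℝ => s ^ p).aestronglyMeasurable
  have hnn : 0 ≤ᵐ[volume.restrict (Ioo (0:ℝ) 1)] fun s : ℝ => s ^ p := by
    filter_upwards [ae_restrict_mem measurableSet_Ioo] with s hs
    exact Real.rpow_nonneg hs.1.le _
  rw [← intervalIntegral.integrableOn_Ioo_rpow_iff (zero_lt_one)]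
  constructor
  · intro h
    exact ⟨hmeas, (hasFiniteIntegral_iff_ofReal hnn).2 h⟩
  · intro h
    exact (hasFiniteIntegral_iff_ofReal hnn).1 h.2

open Set in
private lemma annulus_iff {d : ℕ} (hd : 0 < d) (p : ℝ) :
    (∫⁻ y in {y : EuclideanSpace ℝ (Fin d) | 1 < ‖y‖ ∧ ‖y‖ ≤ 2},
      ENNReal.ofReal ((‖y‖ - 1) ^ p)) < ⊤ ↔ -1 < p := by
  haveI : Nonempty (Fin d) := Fin.pos_iff_nonempty.mp hd
  set E := EuclideanSpace ℝ (Fin d)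
  set w : ℝ → ℝ≥0∞ := fun r => (Ioc (1:ℝ) 2).indicator (fun r => ENNReal.ofReal ((r-1)^p)) r
    with hw
  have hwm : Measurable w := Measurable.indicator (by fun_prop) measurableSet_Ioc
  have hA' : MeasurableSet {y : E | 1 < ‖y‖ ∧ ‖y‖ ≤ 2} := by
    apply MeasurableSet.inter
    · exact measurableSet_lt measurable_const measurable_norm
    · exact measurableSet_le measurable_norm measurable_const
  have h1 : (∫⁻ y in {y : E | 1 < ‖y‖ ∧ ‖y‖ ≤ 2}, ENNReal.ofReal ((‖y‖ - 1) ^ p))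
      = ∫⁻ y : E, w ‖y‖ := by
    rw [← lintegral_indicator hA']
    apply lintegral_congr
    intro y
    simp only [hw, Set.indicator_apply, Set.mem_setOf_eq, Set.mem_Ioc]
  rw [h1, polar_lintegral volume w hwm]
  have hfr : Module.finrank ℝ E = d := finrank_euclideanSpace_fin
  rw [hfr]
  set C₀ := (volume : Measure E).toSphere Set.univ with hC₀
  have hC₀pos : C₀ ≠ 0 := by
    rw [hC₀, Measure.toSphere_apply_univ, hfr]
    exact mul_ne_zero (by exact_mod_cast hd.ne') (measure_ball_pos volume 0 one_pos).ne'
  have hC₀top : C₀ ≠ ⊤ := measure_ne_top _ _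
  set M := ∫⁻ r in Ioc (1:ℝ) 2, ENNReal.ofReal ((r-1)^p) with hM
  have h2 : ∫⁻ r in Ioi (0:ℝ), ENNReal.ofReal (r ^ (d - 1)) * w r
      = ∫⁻ r in Ioc (1:ℝ) 2, ENNReal.ofReal (r ^ (d - 1)) * ENNReal.ofReal ((r-1)^p) := by
    have : (fun r : ℝ => ENNReal.ofReal (r ^ (d - 1)) * w r)
        = (Ioc (1:ℝ) 2).indicator
            (fun r => ENNReal.ofReal (r ^ (d - 1)) * ENNReal.ofReal ((r-1)^p)) := by
      funext r
      simp only [hw]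
      by_cases hr : r ∈ Ioc (1:ℝ) 2
      · simp [Set.indicator_apply, hr]
      · simp [Set.indicator_apply, hr]
    have hsub : Ioc (1:ℝ) 2 ⊆ Ioi 0 := fun r hr => lt_trans zero_lt_one hr.1
    rw [this, lintegral_indicator measurableSet_Ioc, Measure.restrict_restrict measurableSet_Ioc,
      Set.inter_eq_left.2 hsub]
  rw [h2]
  -- sandwich between M and 2^(d-1) * M
  have hlow : M ≤ ∫⁻ r in Ioc (1:ℝ) 2,
      ENNReal.ofReal (r ^ (d - 1)) * ENNReal.ofReal ((r-1)^p) := by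
    rw [hM]
    apply lintegral_mono_ae
    filter_upwards [ae_restrict_mem measurableSet_Ioc] with r hr
    refine le_mul_of_one_le_left zero_le ?_
    rw [show (1:ℝ≥0∞) = ENNReal.ofReal 1 by simp]
    exact ENNReal.ofReal_le_ofReal (one_le_pow₀ hr.1.le)
  have hup : (∫⁻ r in Ioc (1:ℝ) 2, ENNReal.ofReal (r ^ (d - 1)) * ENNReal.ofReal ((r-1)^p))
      ≤ ENNReal.ofReal (2 ^ (d - 1)) * M := by
    rw [hM, ← lintegral_const_mul' _ _ ENNReal.ofReal_ne_top]
    apply lintegral_mono_ae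
    filter_upwards [ae_restrict_mem measurableSet_Ioc] with r hr
    refine mul_le_mul_left (ENNReal.ofReal_le_ofReal ?_) _
    exact pow_le_pow_left₀ (le_trans zero_le_one hr.1.le) hr.2 _
  -- M equals the model 1D integral
  have hMeq : M = ∫⁻ s in Ioo (0:ℝ) 1, ENNReal.ofReal (s ^ p) := by
    have := (measurePreserving_add_right volume (1:ℝ)).setLIntegral_comp_preimage_emb
      (measurableEmbedding_addRight (1:ℝ)) (fun r : ℝ => ENNReal.ofReal ((r-1)^p)) (Ioc 1 2)
    rw [hM, ← this]
    have hpre : (fun x : ℝ => x + 1) ⁻¹' Ioc (1:ℝ) 2 = Ioc (0:ℝ) 1 := by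
      ext x
      simp only [Set.mem_preimage, Set.mem_Ioc]
      constructor <;> intro h <;> exact ⟨by linarith [h.1], by linarith [h.2]⟩
    rw [hpre, setLIntegral_congr (Ioo_ae_eq_Ioc (a := (0:ℝ)) (b := 1))]
    apply setLIntegral_congr_fun measurableSet_Ioc
    intro s _
    norm_num
  constructor
  · intro h
    rw [← oneD_iff p, ← hMeq]
    have hC : C₀ * M < ⊤ := lt_of_le_of_lt (mul_le_mul_right hlow _) h
    rcases (ENNReal.mul_lt_top_iff.1 hC) with ⟨_, h2⟩ | h0 | h0
    · exact h2
    · exact absurd h0 hC₀pos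
    · rw [h0]; exact ENNReal.zero_lt_top
  · intro h
    have hMlt : M < ⊤ := by rw [hMeq]; exact (oneD_iff p).2 h
    calc C₀ * ∫⁻ r in Ioc (1:ℝ) 2, ENNReal.ofReal (r ^ (d - 1)) * ENNReal.ofReal ((r-1)^p)
        ≤ C₀ * (ENNReal.ofReal (2 ^ (d - 1)) * M) := mul_le_mul_right hup _
      _ < ⊤ := ENNReal.mul_lt_top hC₀top.lt_top
          (ENNReal.mul_lt_top ENNReal.ofReal_lt_top hMlt)

open Set in
private lemma Fub {d : ℕ} (hd : 0 < d) {α : ℝ} (hα0 : 0 < α)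
    {y : EuclideanSpace ℝ (Fin d)} (hy : 1 < ‖y‖) :
    (∫⁻ x in ball (0 : EuclideanSpace ℝ (Fin d)) 1,
        ENNReal.ofReal (‖x - y‖ ^ (-(d:ℝ) - α)))
      ≤ (volume : Measure (EuclideanSpace ℝ (Fin d))).toSphere Set.univ *
          ENNReal.ofReal ((‖y‖ - 1) ^ (-α) / α) := by
  haveI : Nonempty (Fin d) := Fin.pos_iff_nonempty.mp hd
  set t : ℝ := ‖y‖ - 1 with htdef
  have ht : 0 < t := by rw [htdef]; linarith
  set h₁ : ℝ → ℝ≥0∞ :=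
    fun r => (Ioi t).indicator (fun r => ENNReal.ofReal (r ^ (-(d:ℝ) - α))) r with hh₁
  have hm : Measurable h₁ := Measurable.indicator (by fun_prop) measurableSet_Ioi
  have step1 : (∫⁻ x in ball (0 : EuclideanSpace ℝ (Fin d)) 1,
      ENNReal.ofReal (‖x - y‖ ^ (-(d:ℝ) - α))) ≤ ∫⁻ x, h₁ ‖x - y‖ := by
    have heq : (∫⁻ x in ball (0 : EuclideanSpace ℝ (Fin d)) 1,
        ENNReal.ofReal (‖x - y‖ ^ (-(d:ℝ) - α)))
        = ∫⁻ x in ball (0 : EuclideanSpace ℝ (Fin d)) 1, h₁ ‖x - y‖ := by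
      apply setLIntegral_congr_fun measurableSet_ball
      intro x hx
      rw [mem_ball, dist_zero_right] at hx
      have hgt : t < ‖x - y‖ := by
        have h2 : ‖y‖ - ‖x‖ ≤ ‖y - x‖ := norm_sub_norm_le y x
        rw [norm_sub_rev y x] at h2
        rw [htdef]; linarith
      simp [hh₁, Set.indicator_apply, hgt]
    rw [heq]
    exact lintegral_mono' Measure.restrict_le_self (le_refl _)
  refine le_trans step1 ?_
  have step2 : ∫⁻ x : EuclideanSpace ℝ (Fin d), h₁ ‖x - y‖ = ∫⁻ x : EuclideanSpace ℝ (Fin d), h₁ ‖x‖ := by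
    have h3 := lintegral_add_right_eq_self
      (μ := (volume : Measure (EuclideanSpace ℝ (Fin d)))) (fun x => h₁ ‖x‖) (-y)
    simp only [← sub_eq_add_neg] at h3
    exact h3
  rw [step2, polar_lintegral volume h₁ hm, finrank_euclideanSpace_fin]
  have h4 : ∫⁻ r in Ioi (0:ℝ), ENNReal.ofReal (r ^ (d - 1)) * h₁ r
      = ∫⁻ r in Ioi t, ENNReal.ofReal (r ^ (d-1)) * ENNReal.ofReal (r ^ (-(d:ℝ) - α)) := by
    have heq2 : (fun r : ℝ => ENNReal.ofReal (r ^ (d - 1)) * h₁ r)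
        = (Ioi t).indicator
          (fun r => ENNReal.ofReal (r ^ (d-1)) * ENNReal.ofReal (r ^ (-(d:ℝ) - α))) := by
      funext r; simp only [hh₁]
      by_cases hr : r ∈ Ioi t
      · simp [Set.indicator_apply, hr]
      · simp [Set.indicator_apply, hr]
    have hint : Ioi t ∩ Ioi (0:ℝ) = Ioi t := Set.inter_eq_left.2 (fun r hr => ht.trans hr)
    rw [heq2, lintegral_indicator measurableSet_Ioi, Measure.restrict_restrict measurableSet_Ioi,
      hint]
  rw [h4]
  have h5 : ∫⁻ r in Ioi t, ENNReal.ofReal (r ^ (d-1)) * ENNReal.ofReal (r ^ (-(d:ℝ) - α))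
      = ∫⁻ r in Ioi t, ENNReal.ofReal (r ^ (-1 - α)) := by
    apply setLIntegral_congr_fun measurableSet_Ioi
    intro r hr
    dsimp only
    have hr0 : 0 < r := ht.trans hr
    rw [← ENNReal.ofReal_mul (by positivity)]
    congr 1
    have hcast : ((d - 1 : ℕ) : ℝ) + (-(d:ℝ) - α) = -1 - α := by
      rw [Nat.cast_sub hd]; push_cast; ring
    rw [← Real.rpow_natCast r (d-1), ← Real.rpow_add hr0, hcast]
  rw [h5, tail_lint hα0 ht]

open Set in
private lemma Flb {d : ℕ} (hd : 0 < d) {α : ℝ} (hα0 : 0 < α)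
    {y : EuclideanSpace ℝ (Fin d)} (hy1 : 1 < ‖y‖) (hy2 : ‖y‖ ≤ 2) :
    ENNReal.ofReal (((5:ℝ)/2) ^ (-(d:ℝ) - α) * (2:ℝ)⁻¹ ^ d * (‖y‖ - 1) ^ (-α)) *
        (volume : Measure (EuclideanSpace ℝ (Fin d))) (ball 0 1)
      ≤ ∫⁻ x in ball (0 : EuclideanSpace ℝ (Fin d)) 1,
          ENNReal.ofReal (‖x - y‖ ^ (-(d:ℝ) - α)) := by
  haveI : Nonempty (Fin d) := Fin.pos_iff_nonempty.mp hd
  set t : ℝ := ‖y‖ - 1 with htdef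
  have ht : 0 < t := by rw [htdef]; linarith
  have ht1 : t ≤ 1 := by rw [htdef]; linarith
  have hy0 : ‖y‖ = 1 + t := by rw [htdef]; ring
  have hyn0 : ‖y‖ ≠ 0 := by positivity
  set c : EuclideanSpace ℝ (Fin d) := ((1 - t)/‖y‖) • y with hc
  have hcnorm : ‖c‖ = 1 - t := by
    rw [hc, norm_smul, Real.norm_eq_abs,
      abs_of_nonneg (div_nonneg (by linarith) (norm_nonneg y)), div_mul_cancel₀ _ hyn0]
  have hcy : ‖c - y‖ = 2 * t := by
    have hsub : c - y = ((1-t)/‖y‖ - 1) • y := by rw [hc, sub_smul, one_smul]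
    rw [hsub, norm_smul, Real.norm_eq_abs]
    rw [show |(1-t)/‖y‖ - 1| * ‖y‖ = |((1-t)/‖y‖ - 1) * ‖y‖| by
      rw [abs_mul, abs_of_nonneg (norm_nonneg y)]]
    rw [sub_mul, one_mul, div_mul_cancel₀ _ hyn0,
      show (1 - t) - ‖y‖ = -(2*t) by rw [hy0]; ring, abs_neg, abs_of_pos (by linarith)]
  have hsubset : ball c (t/2) ⊆ ball (0 : EuclideanSpace ℝ (Fin d)) 1 := by
    intro x hx
    rw [mem_ball, dist_zero_right]
    have hxc : ‖x - c‖ < t/2 := by rwa [mem_ball, dist_eq_norm] at hx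
    calc ‖x‖ = ‖(x - c) + c‖ := by rw [sub_add_cancel]
      _ ≤ ‖x - c‖ + ‖c‖ := norm_add_le _ _
      _ < t/2 + (1 - t) := by rw [hcnorm]; linarith
      _ ≤ 1 := by linarith
  have hbound : ∀ x ∈ ball c (t/2),
      ENNReal.ofReal ((5*t/2) ^ (-(d:ℝ) - α)) ≤ ENNReal.ofReal (‖x - y‖ ^ (-(d:ℝ) - α)) := by
    intro x hx
    have hxc : ‖x - c‖ < t/2 := by rwa [mem_ball, dist_eq_norm] at hx
    have htri1 := dist_triangle c x y
    have htri2 := dist_triangle x c y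
    rw [dist_eq_norm, dist_eq_norm, dist_eq_norm] at htri1
    rw [dist_eq_norm, dist_eq_norm, dist_eq_norm] at htri2
    rw [norm_sub_rev c x] at htri1
    have hlo : 0 < ‖x - y‖ := by rw [hcy] at htri1; linarith
    have hhi : ‖x - y‖ ≤ 5*t/2 := by rw [hcy] at htri2; linarith
    have hz : -(d:ℝ) - α ≤ 0 := by
      have : (0:ℝ) ≤ (d:ℝ) := Nat.cast_nonneg d
      linarith
    exact ENNReal.ofReal_le_ofReal (Real.rpow_le_rpow_of_nonpos hlo hhi hz)
  have hreal : (5*t/2) ^ (-(d:ℝ)-α) * (t/2)^d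
      = ((5:ℝ)/2) ^ (-(d:ℝ) - α) * (2:ℝ)⁻¹ ^ d * t ^ (-α) := by
    calc (5*t/2) ^ (-(d:ℝ)-α) * (t/2)^d
        = ((5/2) * t) ^ (-(d:ℝ)-α) * (t * 2⁻¹)^d := by ring_nf
      _ = ((5:ℝ)/2) ^ (-(d:ℝ)-α) * t ^ (-(d:ℝ)-α) * (t ^ ((d:ℕ):ℝ) * (2:ℝ)⁻¹^d) := by
          rw [Real.mul_rpow (by norm_num) ht.le, mul_pow, Real.rpow_natCast]
      _ = ((5:ℝ)/2) ^ (-(d:ℝ)-α) * (2:ℝ)⁻¹^d * (t ^ (-(d:ℝ)-α) * t ^ ((d:ℕ):ℝ)) := by ring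
      _ = ((5:ℝ)/2) ^ (-(d:ℝ)-α) * (2:ℝ)⁻¹^d * t ^ (-α) := by
          rw [← Real.rpow_add ht]
          congr 1
          ring_nf
  calc ENNReal.ofReal (((5:ℝ)/2) ^ (-(d:ℝ) - α) * (2:ℝ)⁻¹ ^ d * t ^ (-α)) *
        (volume : Measure (EuclideanSpace ℝ (Fin d))) (ball 0 1)
      = ENNReal.ofReal ((5*t/2) ^ (-(d:ℝ) - α)) * volume (ball c (t/2)) := by
        rw [Measure.addHaar_ball volume c (by positivity : (0:ℝ) ≤ t/2),
          finrank_euclideanSpace_fin, ← mul_assoc,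
          ← ENNReal.ofReal_mul (by positivity), hreal]
    _ ≤ ∫⁻ x in ball c (t/2), ENNReal.ofReal (‖x - y‖ ^ (-(d:ℝ) - α)) := by
        rw [← setLIntegral_const (ball c (t/2)) (ENNReal.ofReal ((5*t/2) ^ (-(d:ℝ) - α)))]
        exact lintegral_mono_ae ((ae_restrict_iff' measurableSet_ball).2 (ae_of_all _ hbound))
    _ ≤ _ := lintegral_mono_set hsubset

open Set in
private lemma reduce {d : ℕ} (hd : 0 < d) (α β : ℝ) :
    (∫⁻ x in ball (0 : EuclideanSpace ℝ (Fin d)) 1, ∫⁻ y,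
        ENNReal.ofReal
          (((if 1 ≤ ‖x‖ ∧ ‖x‖ ≤ 2 then (‖x‖ - 1) ^ β else 0) -
              (if 1 ≤ ‖y‖ ∧ ‖y‖ ≤ 2 then (‖y‖ - 1) ^ β else 0)) ^ 2 *
            ‖x - y‖ ^ (-(d : ℝ) - α)))
    = ∫⁻ y in {y : EuclideanSpace ℝ (Fin d) | 1 < ‖y‖ ∧ ‖y‖ ≤ 2},
        ENNReal.ofReal (((‖y‖ - 1) ^ β) ^ 2) *
          ∫⁻ x in ball (0 : EuclideanSpace ℝ (Fin d)) 1,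
            ENNReal.ofReal (‖x - y‖ ^ (-(d : ℝ) - α)) := by
  haveI : Nonempty (Fin d) := Fin.pos_iff_nonempty.mp hd
  haveI : Nontrivial (EuclideanSpace ℝ (Fin d)) := inferInstance
  have hg : Measurable (fun y : EuclideanSpace ℝ (Fin d) =>
      if 1 ≤ ‖y‖ ∧ ‖y‖ ≤ 2 then (‖y‖ - 1) ^ β else 0) := by
    apply Measurable.ite ?_ (by fun_prop) measurable_const
    rw [Set.setOf_and]
    exact (measurableSet_le measurable_const measurable_norm).inter
      (measurableSet_le measurable_norm measurable_const)
  have hA : MeasurableSet {y : EuclideanSpace ℝ (Fin d) | 1 ≤ ‖y‖ ∧ ‖y‖ ≤ 2} := by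
    rw [Set.setOf_and]
    exact (measurableSet_le measurable_const measurable_norm).inter
      (measurableSet_le measurable_norm measurable_const)
  have hA' : MeasurableSet {y : EuclideanSpace ℝ (Fin d) | 1 < ‖y‖ ∧ ‖y‖ ≤ 2} := by
    rw [Set.setOf_and]
    exact (measurableSet_lt measurable_const measurable_norm).inter
      (measurableSet_le measurable_norm measurable_const)
  have stepAB : (∫⁻ x in ball (0 : EuclideanSpace ℝ (Fin d)) 1, ∫⁻ y,
        ENNReal.ofReal
          (((if 1 ≤ ‖x‖ ∧ ‖x‖ ≤ 2 then (‖x‖ - 1) ^ β else 0) -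
              (if 1 ≤ ‖y‖ ∧ ‖y‖ ≤ 2 then (‖y‖ - 1) ^ β else 0)) ^ 2 *
            ‖x - y‖ ^ (-(d : ℝ) - α)))
      = ∫⁻ x in ball (0 : EuclideanSpace ℝ (Fin d)) 1, ∫⁻ y,
          ENNReal.ofReal ((if 1 ≤ ‖y‖ ∧ ‖y‖ ≤ 2 then (‖y‖ - 1) ^ β else 0) ^ 2) *
            ENNReal.ofReal (‖x - y‖ ^ (-(d : ℝ) - α)) := by
    apply setLIntegral_congr_fun measurableSet_ball
    intro x hx
    apply lintegral_congr
    intro y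
    rw [mem_ball, dist_zero_right] at hx
    have hx1 : ¬ (1 ≤ ‖x‖ ∧ ‖x‖ ≤ 2) := by intro h; linarith [h.1]
    rw [if_neg hx1, zero_sub, neg_sq, ENNReal.ofReal_mul (sq_nonneg _)]
  rw [stepAB]
  have hmeasprod : AEMeasurable
      (fun p : EuclideanSpace ℝ (Fin d) × EuclideanSpace ℝ (Fin d) =>
        ENNReal.ofReal ((if 1 ≤ ‖p.2‖ ∧ ‖p.2‖ ≤ 2 then (‖p.2‖ - 1) ^ β else 0) ^ 2) *
          ENNReal.ofReal (‖p.1 - p.2‖ ^ (-(d : ℝ) - α)))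
      ((volume.restrict (ball (0 : EuclideanSpace ℝ (Fin d)) 1)).prod volume) := by
    apply Measurable.aemeasurable
    refine Measurable.mul
      (f := fun p : EuclideanSpace ℝ (Fin d) × EuclideanSpace ℝ (Fin d) =>
        ENNReal.ofReal ((if 1 ≤ ‖p.2‖ ∧ ‖p.2‖ ≤ 2 then (‖p.2‖ - 1) ^ β else 0) ^ 2))
      (g := fun p : EuclideanSpace ℝ (Fin d) × EuclideanSpace ℝ (Fin d) =>
        ENNReal.ofReal (‖p.1 - p.2‖ ^ (-(d : ℝ) - α))) ?_ ?_
    · exact ((hg.comp measurable_snd).pow_const 2).ennreal_ofReal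
    · fun_prop
  rw [lintegral_lintegral_swap hmeasprod]
  have hpull : ∀ y : EuclideanSpace ℝ (Fin d),
      (∫⁻ x in ball (0 : EuclideanSpace ℝ (Fin d)) 1,
        ENNReal.ofReal ((if 1 ≤ ‖y‖ ∧ ‖y‖ ≤ 2 then (‖y‖ - 1) ^ β else 0) ^ 2) *
          ENNReal.ofReal (‖x - y‖ ^ (-(d : ℝ) - α)))
      = ENNReal.ofReal ((if 1 ≤ ‖y‖ ∧ ‖y‖ ≤ 2 then (‖y‖ - 1) ^ β else 0) ^ 2) *
          ∫⁻ x in ball (0 : EuclideanSpace ℝ (Fin d)) 1,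
            ENNReal.ofReal (‖x - y‖ ^ (-(d : ℝ) - α)) :=
    fun y => lintegral_const_mul' _ _ ENNReal.ofReal_ne_top
  rw [lintegral_congr hpull]
  have hrestr : (∫⁻ y : EuclideanSpace ℝ (Fin d),
      ENNReal.ofReal ((if 1 ≤ ‖y‖ ∧ ‖y‖ ≤ 2 then (‖y‖ - 1) ^ β else 0) ^ 2) *
        ∫⁻ x in ball (0 : EuclideanSpace ℝ (Fin d)) 1,
          ENNReal.ofReal (‖x - y‖ ^ (-(d : ℝ) - α)))
      = ∫⁻ y in {y : EuclideanSpace ℝ (Fin d) | 1 ≤ ‖y‖ ∧ ‖y‖ ≤ 2},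
        ENNReal.ofReal ((if 1 ≤ ‖y‖ ∧ ‖y‖ ≤ 2 then (‖y‖ - 1) ^ β else 0) ^ 2) *
          ∫⁻ x in ball (0 : EuclideanSpace ℝ (Fin d)) 1,
            ENNReal.ofReal (‖x - y‖ ^ (-(d : ℝ) - α)) := by
    rw [← lintegral_indicator hA]
    apply lintegral_congr
    intro y
    by_cases hy : 1 ≤ ‖y‖ ∧ ‖y‖ ≤ 2
    · rw [Set.indicator_of_mem (show y ∈ {y : EuclideanSpace ℝ (Fin d) | 1 ≤ ‖y‖ ∧ ‖y‖ ≤ 2}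
        from hy)]
    · rw [Set.indicator_of_notMem (show y ∉ {y : EuclideanSpace ℝ (Fin d) | 1 ≤ ‖y‖ ∧ ‖y‖ ≤ 2}
        from hy), if_neg hy]
      simp
  rw [hrestr]
  have hae : {y : EuclideanSpace ℝ (Fin d) | 1 ≤ ‖y‖ ∧ ‖y‖ ≤ 2}
      =ᵐ[volume] {y : EuclideanSpace ℝ (Fin d) | 1 < ‖y‖ ∧ ‖y‖ ≤ 2} := by
    rw [MeasureTheory.ae_eq_set]
    constructor
    · refine measure_mono_null ?_ (Measure.addHaar_sphere volume 0 1)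
      intro z hz
      have h1 : 1 ≤ ‖z‖ := hz.1.1
      have h2 : ‖z‖ ≤ 2 := hz.1.2
      have h3 : ¬ (1 < ‖z‖ ∧ ‖z‖ ≤ 2) := hz.2
      rw [mem_sphere_zero_iff_norm]
      by_contra hne
      exact h3 ⟨lt_of_le_of_ne h1 (Ne.symm hne), h2⟩
    · refine measure_mono_null ?_ (measure_empty (μ := (volume : Measure (EuclideanSpace ℝ (Fin d)))))
      intro z hz
      exact absurd ⟨hz.1.1.le, hz.1.2⟩ hz.2
  rw [setLIntegral_congr hae]
  apply setLIntegral_congr_fun hA'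
  intro y hy
  have hy' : 1 < ‖y‖ ∧ ‖y‖ ≤ 2 := hy
  dsimp only
  rw [if_pos ⟨hy'.1.le, hy'.2⟩]

/-- Example `randwerte`: for `Ω = B₁(0)`, `k(x,y) = |x−y|^{−d−α}` and
`g(x) = (|x|−1)^β` on `1 ≤ |x| ≤ 2`, `g = 0` elsewhere, one has
`∬_{B₁×ℝ^d} (g(x)−g(y))² |x−y|^{−d−α} dy dx < ∞ ↔ β > (α−1)/2`. -/
theorem stmt_8 {d : ℕ} (hd : 0 < d) (α β : ℝ) (hα : α ∈ Set.Ioo (0 : ℝ) 2) :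
    (∫⁻ x in ball (0 : EuclideanSpace ℝ (Fin d)) 1, ∫⁻ y,
        ENNReal.ofReal
          (((if 1 ≤ ‖x‖ ∧ ‖x‖ ≤ 2 then (‖x‖ - 1) ^ β else 0) -
              (if 1 ≤ ‖y‖ ∧ ‖y‖ ≤ 2 then (‖y‖ - 1) ^ β else 0)) ^ 2 *
            ‖x - y‖ ^ (-(d : ℝ) - α))) < ⊤ ↔ (α - 1) / 2 < β := by
  obtain ⟨hα0, hα2⟩ := hα
  haveI : Nonempty (Fin d) := Fin.pos_iff_nonempty.mp hd
  rw [reduce hd α β]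
  have hA' : MeasurableSet {y : EuclideanSpace ℝ (Fin d) | 1 < ‖y‖ ∧ ‖y‖ ≤ 2} := by
    rw [Set.setOf_and]
    exact (measurableSet_lt measurable_const measurable_norm).inter
      (measurableSet_le measurable_norm measurable_const)
  have hC₀top : ((volume : Measure (EuclideanSpace ℝ (Fin d))).toSphere Set.univ) ≠ ⊤ :=
    measure_ne_top _ _
  have hV₁0 : (volume : Measure (EuclideanSpace ℝ (Fin d))) (ball 0 1) ≠ 0 :=
    (measure_ball_pos volume 0 one_pos).ne'
  have hV₁top : (volume : Measure (EuclideanSpace ℝ (Fin d))) (ball 0 1) ≠ ⊤ :=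
    measure_ball_lt_top.ne
  have hcLpos : 0 < ((5:ℝ)/2) ^ (-(d:ℝ) - α) * (2:ℝ)⁻¹ ^ d := by positivity
  have hsq : ∀ y : EuclideanSpace ℝ (Fin d), 1 < ‖y‖ →
      ENNReal.ofReal (((‖y‖-1)^β)^2) = ENNReal.ofReal ((‖y‖-1) ^ (2*β)) := by
    intro y hy
    have ht : (0:ℝ) < ‖y‖ - 1 := by linarith
    congr 1
    rw [← Real.rpow_natCast ((‖y‖-1)^β) 2, ← Real.rpow_mul (le_of_lt ht)]
    norm_num [mul_comm]
  constructor
  · intro h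
    have hlow : (ENNReal.ofReal (((5:ℝ)/2) ^ (-(d:ℝ) - α) * (2:ℝ)⁻¹ ^ d) *
          (volume : Measure (EuclideanSpace ℝ (Fin d))) (ball 0 1)) *
          ∫⁻ y in {y : EuclideanSpace ℝ (Fin d) | 1 < ‖y‖ ∧ ‖y‖ ≤ 2},
            ENNReal.ofReal ((‖y‖-1) ^ (2*β - α))
        ≤ ∫⁻ y in {y : EuclideanSpace ℝ (Fin d) | 1 < ‖y‖ ∧ ‖y‖ ≤ 2},
            ENNReal.ofReal (((‖y‖ - 1) ^ β) ^ 2) *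
              ∫⁻ x in ball (0 : EuclideanSpace ℝ (Fin d)) 1,
                ENNReal.ofReal (‖x - y‖ ^ (-(d : ℝ) - α)) := by
      rw [← lintegral_const_mul' _ _ (ENNReal.mul_ne_top ENNReal.ofReal_ne_top hV₁top)]
      apply lintegral_mono_ae
      rw [ae_restrict_iff' hA']
      apply ae_of_all
      intro y hy
      obtain ⟨hy1, hy2⟩ := hy
      have ht : (0:ℝ) < ‖y‖ - 1 := by linarith
      rw [hsq y hy1]
      have hrr : (((5:ℝ)/2) ^ (-(d:ℝ) - α) * (2:ℝ)⁻¹ ^ d) * (‖y‖-1) ^ (2*β-α)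
          = (‖y‖-1) ^ (2*β) *
            ((((5:ℝ)/2) ^ (-(d:ℝ) - α) * (2:ℝ)⁻¹ ^ d) * (‖y‖-1) ^ (-α)) := by
        rw [show (‖y‖-1) ^ (2*β) *
            ((((5:ℝ)/2) ^ (-(d:ℝ) - α) * (2:ℝ)⁻¹ ^ d) * (‖y‖-1) ^ (-α))
          = (((5:ℝ)/2) ^ (-(d:ℝ) - α) * (2:ℝ)⁻¹ ^ d) *
            ((‖y‖-1) ^ (2*β) * (‖y‖-1) ^ (-α)) by ring, ← Real.rpow_add ht,
          show 2*β + -α = 2*β - α by ring]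
      rw [mul_right_comm, ← ENNReal.ofReal_mul hcLpos.le, hrr,
        ENNReal.ofReal_mul (by positivity : (0:ℝ) ≤ (‖y‖-1) ^ (2*β)), mul_assoc]
      exact mul_le_mul_right (Flb hd hα0 hy1 hy2) _
    have hΦ : (∫⁻ y in {y : EuclideanSpace ℝ (Fin d) | 1 < ‖y‖ ∧ ‖y‖ ≤ 2},
        ENNReal.ofReal ((‖y‖-1) ^ (2*β - α))) ≠ ⊤ := by
      intro htop
      rw [htop, ENNReal.mul_top (mul_ne_zero (ENNReal.ofReal_pos.2 hcLpos).ne' hV₁0)] at hlow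
      exact absurd (top_le_iff.1 hlow) h.ne
    have hp : -1 < 2*β - α := (annulus_iff hd (2*β - α)).1 (lt_top_iff_ne_top.2 hΦ)
    linarith
  · intro h
    have hβ : -1 < 2*β - α := by linarith
    have hΦlt : (∫⁻ y in {y : EuclideanSpace ℝ (Fin d) | 1 < ‖y‖ ∧ ‖y‖ ≤ 2},
        ENNReal.ofReal ((‖y‖-1) ^ (2*β - α))) < ⊤ := (annulus_iff hd (2*β - α)).2 hβ
    have hup : (∫⁻ y in {y : EuclideanSpace ℝ (Fin d) | 1 < ‖y‖ ∧ ‖y‖ ≤ 2},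
            ENNReal.ofReal (((‖y‖ - 1) ^ β) ^ 2) *
              ∫⁻ x in ball (0 : EuclideanSpace ℝ (Fin d)) 1,
                ENNReal.ofReal (‖x - y‖ ^ (-(d : ℝ) - α)))
        ≤ (((volume : Measure (EuclideanSpace ℝ (Fin d))).toSphere Set.univ) *
            ENNReal.ofReal α⁻¹) *
          ∫⁻ y in {y : EuclideanSpace ℝ (Fin d) | 1 < ‖y‖ ∧ ‖y‖ ≤ 2},
            ENNReal.ofReal ((‖y‖-1) ^ (2*β - α)) := by
      rw [← lintegral_const_mul' _ _ (ENNReal.mul_ne_top hC₀top ENNReal.ofReal_ne_top)]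
      apply lintegral_mono_ae
      rw [ae_restrict_iff' hA']
      apply ae_of_all
      intro y hy
      obtain ⟨hy1, hy2⟩ := hy
      have ht : (0:ℝ) < ‖y‖ - 1 := by linarith
      rw [hsq y hy1]
      calc ENNReal.ofReal ((‖y‖-1) ^ (2*β)) *
            ∫⁻ x in ball (0 : EuclideanSpace ℝ (Fin d)) 1,
              ENNReal.ofReal (‖x - y‖ ^ (-(d : ℝ) - α))
          ≤ ENNReal.ofReal ((‖y‖-1) ^ (2*β)) *
            (((volume : Measure (EuclideanSpace ℝ (Fin d))).toSphere Set.univ) *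
              ENNReal.ofReal ((‖y‖ - 1) ^ (-α) / α)) :=
            mul_le_mul_right (Fub hd hα0 hy1) _
        _ = (((volume : Measure (EuclideanSpace ℝ (Fin d))).toSphere Set.univ) *
              ENNReal.ofReal α⁻¹) * ENNReal.ofReal ((‖y‖-1) ^ (2*β - α)) := by
            have hrr2 : (‖y‖-1) ^ (2*β) * ((‖y‖-1) ^ (-α)/α) = α⁻¹ * (‖y‖-1) ^ (2*β-α) := by
              rw [div_eq_mul_inv,
                show (‖y‖-1) ^ (2*β) * ((‖y‖-1) ^ (-α) * α⁻¹)
                  = ((‖y‖-1) ^ (2*β) * (‖y‖-1) ^ (-α)) * α⁻¹ by ring,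
                ← Real.rpow_add ht, show 2*β + -α = 2*β - α by ring]
              ring
            rw [← mul_assoc,
              mul_comm (ENNReal.ofReal ((‖y‖-1) ^ (2*β)))
                (((volume : Measure (EuclideanSpace ℝ (Fin d))).toSphere Set.univ)),
              mul_assoc, ← ENNReal.ofReal_mul (by positivity), hrr2,
              ENNReal.ofReal_mul (by positivity : (0:ℝ) ≤ α⁻¹), ← mul_assoc]
    exact lt_of_le_of_lt hup (ENNReal.mul_lt_top
      (ENNReal.mul_ne_top hC₀top ENNReal.ofReal_ne_top).lt_top hΦlt)
end

section
/- Let Ω ⊂ ℝ^d be open and bounded, and suppose the symmetric part k_s of a kernel k satisfies (E_α): ∬(u(x)−u(y))²k_s(x,y)dydx ≥ λ α(2−α) ∬ (u(x)−u(y))²|x−y|^{−d−α} dydx for some α ∈ (0,2), λ > 0, and all u ∈ L²(ℝ^d). Then the embedding of H_Ω(ℝ^d;k) into L²(Ω) is compact. -/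
open MeasureTheory ENNReal

variable {d : ℕ}

/-- Symmetric part of a real-valued kernel. -/
noncomputable def kSym (k : EuclideanSpace ℝ (Fin d) → EuclideanSpace ℝ (Fin d) → ℝ)
    (x y : EuclideanSpace ℝ (Fin d)) : ℝ := (k x y + k y x) / 2

/-- The nonlocal energy `∬ (u(x)−u(y))² k_s(x,y) dy dx ∈ [0,∞]`. -/
noncomputable def energy (k : EuclideanSpace ℝ (Fin d) → EuclideanSpace ℝ (Fin d) → ℝ)
    (u : EuclideanSpace ℝ (Fin d) → ℝ) : ℝ≥0∞ :=
  ∫⁻ x, ∫⁻ y, ENNReal.ofReal ((u x - u y) ^ 2 * kSym k x y)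


namespace Stmt14Aux
variable {d : ℕ}

/-- half-open cube of side `h` indexed by `z ∈ ℤ^d`. -/
def cell (h : ℝ) (z : Fin d → ℤ) : Set (EuclideanSpace ℝ (Fin d)) :=
  {x | ∀ i, x i ∈ Set.Ico (z i * h) (z i * h + h)}

noncomputable def idx (h : ℝ) (x : EuclideanSpace ℝ (Fin d)) : Fin d → ℤ := fun i => ⌊x i / h⌋

lemma measurable_coord (i : Fin d) : Measurable fun x : EuclideanSpace ℝ (Fin d) => x i :=
  (measurable_pi_apply i).comp (WithLp.measurable_ofLp 2 (Fin d → ℝ))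

lemma measurableSet_cell (h : ℝ) (z : Fin d → ℤ) : MeasurableSet (cell h z) := by
  have : cell h z = ⋂ i, (fun x : EuclideanSpace ℝ (Fin d) => x i) ⁻¹' Set.Ico (z i * h) (z i * h + h) := by
    ext x; simp [cell, Set.mem_iInter]
  rw [this]
  exact MeasurableSet.iInter fun i => (measurable_coord i) measurableSet_Ico

lemma mem_cell_iff {h : ℝ} (hh : 0 < h) {z : Fin d → ℤ} {x : EuclideanSpace ℝ (Fin d)} :
    x ∈ cell h z ↔ z = idx h x := by
  constructor
  · intro hx
    funext i
    have h1 := (hx i).1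
    have h2 := (hx i).2
    have : (z i : ℝ) ≤ x i / h ∧ x i / h < z i + 1 := by
      constructor
      · rw [le_div_iff₀ hh]; linarith
      · rw [div_lt_iff₀ hh]; push_cast; linarith
    exact ((Int.floor_eq_iff).2 this).symm
  · rintro rfl i
    have h1 : (⌊x i / h⌋ : ℝ) ≤ x i / h := Int.floor_le _
    have h2 : x i / h < ⌊x i / h⌋ + 1 := Int.lt_floor_add_one _
    constructor
    · calc (idx h x i : ℝ) * h ≤ (x i / h) * h := by
            exact mul_le_mul_of_nonneg_right h1 hh.le
      _ = x i := by field_simp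
    · have : x i = (x i / h) * h := by field_simp
      rw [this]
      calc (x i / h) * h < ((idx h x i : ℝ) + 1) * h := by
            exact mul_lt_mul_of_pos_right h2 hh
      _ = idx h x i * h + h := by ring

lemma mem_cell_idx {h : ℝ} (hh : 0 < h) (x : EuclideanSpace ℝ (Fin d)) :
    x ∈ cell h (idx h x) := (mem_cell_iff hh).2 rfl

lemma iUnion_cell {h : ℝ} (hh : 0 < h) : (⋃ z : Fin d → ℤ, cell h z) = Set.univ :=
  Set.eq_univ_of_forall fun x => Set.mem_iUnion.2 ⟨idx h x, mem_cell_idx hh x⟩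

lemma pairwise_disjoint_cell {h : ℝ} (hh : 0 < h) :
    Pairwise (Function.onFun Disjoint (cell (d := d) h)) := by
  intro z z' hzz'
  refine Set.disjoint_left.2 fun x hx hx' => hzz' ?_
  rw [mem_cell_iff hh] at hx hx'
  rw [hx, hx']

lemma volume_cell {h : ℝ} (hh : 0 < h) (z : Fin d → ℤ) :
    volume (cell h z) = ENNReal.ofReal (h ^ d) := by
  have hpre : cell h z = (MeasurableEquiv.toLp 2 (Fin d → ℝ)).symm ⁻¹'
      (Set.univ.pi fun i => Set.Ico ((z i : ℝ) * h) (z i * h + h)) := by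
    ext x
    simp [cell, Set.mem_pi]
  rw [hpre, (EuclideanSpace.volume_preserving_symm_measurableEquiv_toLp (Fin d)).measure_preimage
    ((MeasurableSet.univ_pi fun i => measurableSet_Ico).nullMeasurableSet)]
  rw [volume_pi_pi]
  simp [Real.volume_Ico, ← ENNReal.ofReal_pow hh.le]


noncomputable def approx (h : ℝ) (u : EuclideanSpace ℝ (Fin d) → ℝ)
    (x : EuclideanSpace ℝ (Fin d)) : ℝ :=
  (∫ y in cell h (idx h x), u y) / h ^ d

lemma cell_finiteMeasure {h : ℝ} (hh : 0 < h) (z : Fin d → ℤ) :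
    IsFiniteMeasure (volume.restrict (cell h z)) := by
  constructor
  rw [Measure.restrict_apply_univ, volume_cell hh]
  exact ofReal_lt_top

lemma measurable_idx (h : ℝ) : Measurable (idx (d := d) h) :=
  measurable_pi_lambda _ fun i => Measurable.floor ((measurable_coord i).div_const h)

lemma measurable_approx (h : ℝ) (u : EuclideanSpace ℝ (Fin d) → ℝ) :
    Measurable (approx h u) :=
  (measurable_of_countable fun zf : Fin d → ℤ => (∫ y in cell h zf, u y) / h ^ d).comp
    (measurable_idx h)

lemma integrableOn_cell {h : ℝ} (hh : 0 < h) {u : EuclideanSpace ℝ (Fin d) → ℝ}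
    (hu2 : MemLp u 2) (z : Fin d → ℤ) : IntegrableOn u (cell h z) := by
  haveI := cell_finiteMeasure (d := d) hh z
  exact (hu2.restrict _).integrable one_le_two

lemma sub_approx_eq {h : ℝ} (hh : 0 < h) {u : EuclideanSpace ℝ (Fin d) → ℝ}
    (hu2 : MemLp u 2) (x : EuclideanSpace ℝ (Fin d)) :
    u x - approx h u x = (∫ y in cell h (idx h x), (u x - u y)) / h ^ d := by
  have hint : IntegrableOn u (cell h (idx h x)) := integrableOn_cell hh hu2 _
  have hconst : IntegrableOn (fun _ => u x) (cell h (idx h x)) := by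
    haveI := cell_finiteMeasure (d := d) hh (idx h x)
    exact integrable_const _
  rw [integral_sub hconst hint, setIntegral_const, measureReal_def, volume_cell hh,
    ENNReal.toReal_ofReal (by positivity)]
  have hhd : (0:ℝ) < h ^ d := by positivity
  unfold approx
  field_simp
  ring

lemma sq_ofReal_le_CS {s : Set (EuclideanSpace ℝ (Fin d))} (hs : MeasurableSet s)
    {g : EuclideanSpace ℝ (Fin d) → ℝ} (hg : Measurable g) :
    ENNReal.ofReal ((∫ y in s, g y) ^ 2) ≤
      (∫⁻ y in s, ENNReal.ofReal ((g y) ^ 2)) * volume s := by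
  have habs : ENNReal.ofReal ((∫ y in s, g y) ^ 2)
      = (ENNReal.ofReal |∫ y in s, g y|) ^ 2 := by
    rw [← ENNReal.ofReal_pow (abs_nonneg _), sq_abs]
  have h2 : (ENNReal.ofReal |∫ y in s, g y| : ℝ≥0∞) ≤ ∫⁻ y in s, ENNReal.ofReal |g y| := by
    rw [← Real.enorm_eq_ofReal_abs]
    refine (enorm_integral_le_lintegral_enorm _).trans ?_
    simp [Real.enorm_eq_ofReal_abs]
  have hCS : (∫⁻ y in s, ENNReal.ofReal |g y|) ≤
      (∫⁻ y in s, (ENNReal.ofReal |g y|) ^ (2:ℝ)) ^ (1/(2:ℝ)) * (volume s) ^ (1/(2:ℝ)) := by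
    have := ENNReal.lintegral_mul_le_Lp_mul_Lq (volume.restrict s)
      (Real.HolderConjugate.two_two : (2:ℝ).HolderConjugate 2)
      (f := fun y => ENNReal.ofReal |g y|) (g := fun _ => 1)
      (hg.abs.ennreal_ofReal.aemeasurable) aemeasurable_const
    simpa using this
  have hfp : ∀ y, (ENNReal.ofReal |g y|) ^ (2:ℝ) = ENNReal.ofReal ((g y)^2) := by
    intro y
    rw [ENNReal.ofReal_rpow_of_nonneg (abs_nonneg _) (by norm_num)]
    norm_num [sq_abs]
  calc ENNReal.ofReal ((∫ y in s, g y) ^ 2)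
      = (ENNReal.ofReal |∫ y in s, g y|) ^ 2 := habs
    _ ≤ ((∫⁻ y in s, (ENNReal.ofReal |g y|) ^ (2:ℝ)) ^ (1/(2:ℝ)) * (volume s) ^ (1/(2:ℝ))) ^ 2 :=
        pow_le_pow_left' (h2.trans hCS) 2
    _ = (∫⁻ y in s, (ENNReal.ofReal |g y|) ^ (2:ℝ)) * volume s := by
        rw [mul_pow, ← ENNReal.rpow_natCast (_ ^ (1/(2:ℝ))) 2,
          ← ENNReal.rpow_natCast ((volume s) ^ (1/(2:ℝ))) 2,
          ← ENNReal.rpow_mul, ← ENNReal.rpow_mul]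
        norm_num
    _ = (∫⁻ y in s, ENNReal.ofReal ((g y)^2)) * volume s := by
        congr 1; exact lintegral_congr fun y => hfp y

lemma pointwise_bound {h : ℝ} (hh : 0 < h) {u : EuclideanSpace ℝ (Fin d) → ℝ}
    (hu : Measurable u) (hu2 : MemLp u 2) (x : EuclideanSpace ℝ (Fin d)) :
    ENNReal.ofReal ((u x - approx h u x) ^ 2) ≤
      (∫⁻ y in cell h (idx h x), ENNReal.ofReal ((u x - u y) ^ 2)) / ENNReal.ofReal (h ^ d) := by
  set s := cell h (idx h x)
  set V := ENNReal.ofReal (h ^ d) with hV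
  have hVpos : (0:ℝ) < h ^ d := by positivity
  have hV0 : V ≠ 0 := by simp [hV, hVpos]
  have hVtop : V ≠ ⊤ := ofReal_ne_top
  have hA := sq_ofReal_le_CS (d := d) (measurableSet_cell h (idx h x))
    (g := fun y => u x - u y) (measurable_const.sub hu)
  rw [volume_cell hh, ← hV] at hA
  have heq : ENNReal.ofReal ((u x - approx h u x) ^ 2)
      = ENNReal.ofReal ((∫ y in s, (u x - u y)) ^ 2) / V ^ 2 := by
    rw [sub_approx_eq hh hu2 x, div_pow, ENNReal.ofReal_div_of_pos (by positivity),
      ENNReal.ofReal_pow hVpos.le]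
  rw [heq]
  calc ENNReal.ofReal ((∫ y in s, (u x - u y)) ^ 2) / V ^ 2
      ≤ ((∫⁻ y in s, ENNReal.ofReal ((u x - u y) ^ 2)) * V) / V ^ 2 :=
        ENNReal.div_le_div_right hA _
    _ = (∫⁻ y in s, ENNReal.ofReal ((u x - u y) ^ 2)) / V := by
        rw [sq, ENNReal.mul_div_mul_right _ _ hV0 hVtop]

lemma dist_le_of_mem_cell {h : ℝ} (hh : 0 < h) {z : Fin d → ℤ}
    {x y : EuclideanSpace ℝ (Fin d)} (hx : x ∈ cell h z) (hy : y ∈ cell h z) :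
    ‖x - y‖ ≤ Real.sqrt d * h := by
  have hcoord : ∀ i, ‖(x - y) i‖ ^ 2 ≤ h ^ 2 := by
    intro i
    have h1 := (hx i).1; have h2 := (hx i).2
    have h3 := (hy i).1; have h4 := (hy i).2
    have : |x i - y i| ≤ h := by
      rw [abs_le]; constructor <;> nlinarith
    have hsub : (x - y) i = x i - y i := rfl
    rw [hsub, Real.norm_eq_abs]
    nlinarith [abs_nonneg (x i - y i), this]
  rw [EuclideanSpace.norm_eq]
  calc Real.sqrt (∑ i, ‖(x - y) i‖ ^ 2) ≤ Real.sqrt (∑ _i : Fin d, h ^ 2) :=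
        Real.sqrt_le_sqrt (Finset.sum_le_sum fun i _ => hcoord i)
    _ = Real.sqrt d * h := by
        rw [Finset.sum_const, Finset.card_univ, Fintype.card_fin, nsmul_eq_mul,
          Real.sqrt_mul (by positivity), Real.sqrt_sq hh.le]

lemma sq_le_kernel {α : ℝ} (hα : 0 < α) {D : ℝ} (hD : 0 ≤ D)
    {x y : EuclideanSpace ℝ (Fin d)} (hxy : ‖x - y‖ ≤ D) (a : ℝ) (hax : x = y → a = 0) :
    ENNReal.ofReal (a ^ 2) ≤
      ENNReal.ofReal (D ^ ((d:ℝ) + α)) * ENNReal.ofReal (a ^ 2 * ‖x - y‖ ^ (-(d:ℝ) - α)) := by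
  rcases eq_or_ne x y with rfl | hne
  · simp [hax rfl]
  · have hr : (0:ℝ) < ‖x - y‖ := by
      rw [norm_pos_iff, sub_ne_zero]; exact hne
    have hDpos : (0:ℝ) < D := lt_of_lt_of_le hr hxy
    rw [← ENNReal.ofReal_mul (by positivity)]
    apply ENNReal.ofReal_le_ofReal
    have hrw : D ^ ((d:ℝ) + α) * (a ^ 2 * ‖x - y‖ ^ (-(d:ℝ) - α))
        = a ^ 2 * (D ^ ((d:ℝ) + α) * ‖x - y‖ ^ (-(d:ℝ) - α)) := by ring
    rw [hrw]
    have hge : (1:ℝ) ≤ D ^ ((d:ℝ) + α) * ‖x - y‖ ^ (-(d:ℝ) - α) := by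
      have he : -(d:ℝ) - α = -((d:ℝ) + α) := by ring
      rw [he]
      have h1 : D ^ (-((d:ℝ) + α)) ≤ ‖x - y‖ ^ (-((d:ℝ) + α)) :=
        Real.rpow_le_rpow_of_nonpos hr hxy (neg_nonpos.2 (by positivity))
      calc (1:ℝ) = D ^ ((d:ℝ) + α) * D ^ (-((d:ℝ) + α)) := by
            rw [← Real.rpow_add hDpos, add_neg_cancel, Real.rpow_zero]
        _ ≤ D ^ ((d:ℝ) + α) * ‖x - y‖ ^ (-((d:ℝ) + α)) := by
            have : (0:ℝ) ≤ D ^ ((d:ℝ) + α) := (Real.rpow_pos_of_pos hDpos _).le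
            nlinarith [h1]
    nlinarith [sq_nonneg a, hge]

lemma measurable_W {α : ℝ} {u : EuclideanSpace ℝ (Fin d) → ℝ} (hu : Measurable u) :
    Measurable fun x => ∫⁻ y, ENNReal.ofReal ((u x - u y) ^ 2 * ‖x - y‖ ^ (-(d:ℝ) - α)) := by
  apply Measurable.lintegral_prod_right'
    (f := fun p : EuclideanSpace ℝ (Fin d) × EuclideanSpace ℝ (Fin d) =>
      ENNReal.ofReal ((u p.1 - u p.2) ^ 2 * ‖p.1 - p.2‖ ^ (-(d:ℝ) - α)))
  apply Measurable.ennreal_ofReal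
  exact (((hu.comp measurable_fst).sub (hu.comp measurable_snd)).pow_const 2).mul
    (((measurable_fst.sub measurable_snd).norm).pow measurable_const)

lemma lintegral_eq_tsum_cell {h : ℝ} (hh : 0 < h) (F : EuclideanSpace ℝ (Fin d) → ℝ≥0∞) :
    ∫⁻ x, F x = ∑' z : Fin d → ℤ, ∫⁻ x in cell h z, F x := by
  conv_lhs => rw [← setLIntegral_univ, ← iUnion_cell hh]
  exact lintegral_iUnion (measurableSet_cell h) (pairwise_disjoint_cell hh) F

lemma approx_error {h α : ℝ} (hh : 0 < h) (hα : 0 < α)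
    {u : EuclideanSpace ℝ (Fin d) → ℝ} (hu : Measurable u) (hu2 : MemLp u 2) :
    ∫⁻ x, ENNReal.ofReal ((u x - approx h u x) ^ 2) ≤
      (ENNReal.ofReal ((Real.sqrt d * h) ^ ((d:ℝ) + α)) / ENNReal.ofReal (h ^ d)) *
        ∫⁻ x, ∫⁻ y, ENNReal.ofReal ((u x - u y) ^ 2 * ‖x - y‖ ^ (-(d:ℝ) - α)) := by
  set D := Real.sqrt d * h with hD
  set K := ENNReal.ofReal (D ^ ((d:ℝ) + α)) with hK
  set V := ENNReal.ofReal (h ^ d) with hV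
  set W := fun x => ∫⁻ y, ENNReal.ofReal ((u x - u y) ^ 2 * ‖x - y‖ ^ (-(d:ℝ) - α)) with hW
  have hWmeas : Measurable W := measurable_W hu
  have hKtop : K ≠ ⊤ := ofReal_ne_top
  have hstep2 : ∀ z : Fin d → ℤ, ∫⁻ x in cell h z, ENNReal.ofReal ((u x - approx h u x) ^ 2)
      ≤ K / V * ∫⁻ x in cell h z, W x := by
    intro z
    have hpt : ∀ x ∈ cell h z,
        ENNReal.ofReal ((u x - approx h u x) ^ 2) ≤ K / V * W x := by
      intro x hx
      have hzx : z = idx h x := (mem_cell_iff hh).1 hx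
      have h1 := pointwise_bound hh hu hu2 x
      rw [← hzx] at h1
      refine h1.trans ?_
      have h2 : (∫⁻ y in cell h z, ENNReal.ofReal ((u x - u y) ^ 2))
          ≤ K * W x := by
        have h3 : (∫⁻ y in cell h z, ENNReal.ofReal ((u x - u y) ^ 2))
            ≤ ∫⁻ y in cell h z, K * ENNReal.ofReal ((u x - u y) ^ 2 * ‖x - y‖ ^ (-(d:ℝ) - α)) := by
          refine setLIntegral_mono (by fun_prop) ?_
          intro y hy
          exact sq_le_kernel hα (by positivity) (dist_le_of_mem_cell hh hx hy) _
            (fun hxy => by rw [hxy]; ring)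
        refine h3.trans ?_
        rw [lintegral_const_mul' _ _ hKtop]
        exact mul_le_mul_right (setLIntegral_le_lintegral _ _) K
      calc (∫⁻ y in cell h z, ENNReal.ofReal ((u x - u y) ^ 2)) / V
          ≤ K * W x / V := ENNReal.div_le_div_right h2 V
        _ = K / V * W x := by
            rw [div_eq_mul_inv, div_eq_mul_inv, mul_right_comm]
    calc ∫⁻ x in cell h z, ENNReal.ofReal ((u x - approx h u x) ^ 2)
        ≤ ∫⁻ x in cell h z, K / V * W x := setLIntegral_mono (by fun_prop) hpt
      _ = K / V * ∫⁻ x in cell h z, W x := by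
          rw [lintegral_const_mul' _ _ (by
            simp only [div_eq_mul_inv]
            exact ENNReal.mul_ne_top hKtop (by
              simp [hV, ENNReal.inv_ne_top, (by positivity : (0:ℝ) < h ^ d)]))]
  calc ∫⁻ x, ENNReal.ofReal ((u x - approx h u x) ^ 2)
      = ∑' z : Fin d → ℤ, ∫⁻ x in cell h z, ENNReal.ofReal ((u x - approx h u x) ^ 2) :=
        lintegral_eq_tsum_cell hh _
    _ ≤ ∑' z : Fin d → ℤ, K / V * ∫⁻ x in cell h z, W x := ENNReal.tsum_le_tsum hstep2
    _ = K / V * ∑' z : Fin d → ℤ, ∫⁻ x in cell h z, W x := by rw [ENNReal.tsum_mul_left]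
    _ = K / V * ∫⁻ x, W x := by rw [← lintegral_eq_tsum_cell hh W]
theorem coeFn_sum' {αm : Type*} [MeasurableSpace αm] {μ : Measure αm} {ι : Type*}
    (f : ι → Lp ℝ 2 μ) (s : Finset ι) :
    ⇑(∑ i ∈ s, f i) =ᵐ[μ] fun x => ∑ i ∈ s, f i x := by
  classical
  induction s using Finset.induction_on with
  | empty => simp only [Finset.sum_empty]; exact Lp.coeFn_zero ℝ 2 μ
  | insert a s hnm ih =>
    rw [Finset.sum_insert hnm]
    filter_upwards [Lp.coeFn_add (f a) (∑ i ∈ s, f i), ih] with x h1 h2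
    rw [Finset.sum_insert hnm, h1, Pi.add_apply, h2]

lemma abs_coord_le_norm (x : EuclideanSpace ℝ (Fin d)) (i : Fin d) : |x i| ≤ ‖x‖ := by
  rw [EuclideanSpace.norm_eq]
  have h1 : |x i| = Real.sqrt (‖x i‖ ^ 2) := by
    rw [Real.sqrt_sq_eq_abs, abs_norm, Real.norm_eq_abs]
  rw [h1]
  apply Real.sqrt_le_sqrt
  exact Finset.single_le_sum (f := fun j => ‖x j‖ ^ 2) (fun j _ => by positivity)
    (Finset.mem_univ i)

/-- The finite set of cell indices that can meet the ball of radius `R`. -/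
noncomputable def idxSet (h R : ℝ) : Finset (Fin d → ℤ) :=
  Finset.Icc (fun _ => ⌊-R / h⌋) (fun _ => ⌊R / h⌋)

lemma cell_disjoint_ball {h R : ℝ} (hh : 0 < h) {z : Fin d → ℤ} (hz : z ∉ idxSet (d := d) h R)
    {x : EuclideanSpace ℝ (Fin d)} (hx : x ∈ cell h z) : x ∉ Metric.ball (0:EuclideanSpace ℝ (Fin d)) R := by
  intro hxR
  apply hz
  rw [mem_cell_iff hh] at hx
  subst hx
  rw [idxSet, Finset.mem_Icc]
  have hxR' : ‖x‖ < R := by simpa using hxR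
  constructor <;> (intro i; dsimp [idx])
  · apply Int.floor_le_floor
    have := abs_coord_le_norm x i
    have h2 : -R ≤ x i := by
      have := abs_le.1 (this.trans hxR'.le)
      linarith [this.1]
    exact (div_le_div_iff_of_pos_right hh).2 h2
  · apply Int.floor_le_floor
    have h2 : x i ≤ R := ((abs_le.1 ((abs_coord_le_norm x i).trans hxR'.le)).2)
    exact (div_le_div_iff_of_pos_right hh).2 h2

lemma setIntegral_cell_eq_zero {h R : ℝ} (hh : 0 < h) {Ω : Set (EuclideanSpace ℝ (Fin d))}
    (hΩR : Ω ⊆ Metric.ball 0 R) {u : EuclideanSpace ℝ (Fin d) → ℝ}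
    (huΩ : ∀ᵐ x ∂(volume : Measure (EuclideanSpace ℝ (Fin d))), x ∉ Ω → u x = 0)
    {z : Fin d → ℤ} (hz : z ∉ idxSet (d := d) h R) :
    (∫ y in cell h z, u y) = 0 := by
  have hae : u =ᵐ[volume.restrict (cell h z)] 0 := by
    rw [Filter.EventuallyEq, ae_restrict_iff' (measurableSet_cell h z)]
    filter_upwards [huΩ] with x hx hxc
    exact hx fun hxΩ => cell_disjoint_ball hh hz hxc (hΩR hxΩ)
  rw [integral_congr_ae hae]
  simp

lemma approx_eq_sum {h R : ℝ} (hh : 0 < h) {u : EuclideanSpace ℝ (Fin d) → ℝ}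
    (hz0 : ∀ z ∉ idxSet (d := d) h R, (∫ y in cell h z, u y) = 0)
    (x : EuclideanSpace ℝ (Fin d)) :
    approx h u x = ∑ z ∈ idxSet (d := d) h R,
      (cell h z).indicator (fun _ => (∫ y in cell h z, u y) / h ^ d) x := by
  by_cases hmem : idx h x ∈ idxSet (d := d) h R
  · rw [Finset.sum_eq_single (idx h x)]
    · rw [Set.indicator_of_mem (mem_cell_idx hh x)]
      rfl
    · intro z hz hne
      rw [Set.indicator_of_notMem]
      intro hxz
      exact hne ((mem_cell_iff hh).1 hxz)
    · intro hc; exact absurd hmem hc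
  · have h0 : approx h u x = 0 := by
      rw [approx, hz0 _ hmem, zero_div]
    rw [h0]
    symm
    apply Finset.sum_eq_zero
    intro z hz
    rw [Set.indicator_of_notMem]
    intro hxz
    exact hmem (((mem_cell_iff hh).1 hxz) ▸ hz)

lemma memℒp_approx {h R : ℝ} (hh : 0 < h) {u : EuclideanSpace ℝ (Fin d) → ℝ}
    (hz0 : ∀ z ∉ idxSet (d := d) h R, (∫ y in cell h z, u y) = 0) :
    MemLp (approx h u) 2 (volume : Measure (EuclideanSpace ℝ (Fin d))) := by
  have : approx h u = fun x => ∑ z ∈ idxSet (d := d) h R,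
      (cell h z).indicator (fun _ => (∫ y in cell h z, u y) / h ^ d) x :=
    funext (approx_eq_sum hh hz0)
  rw [this]
  apply memLp_finsetSum
  intro z _
  exact memLp_indicator_const 2 (measurableSet_cell h z) _
    (Or.inr (by rw [volume_cell hh]; exact ofReal_ne_top))

lemma eLpNorm_two_eq (f : EuclideanSpace ℝ (Fin d) → ℝ) :
    eLpNorm f 2 volume = (∫⁻ x, ENNReal.ofReal ((f x) ^ 2)) ^ (1/(2:ℝ)) := by
  rw [eLpNorm_eq_lintegral_rpow_enorm_toReal (by norm_num) (by norm_num)]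
  congr 1
  · apply lintegral_congr
    intro x
    rw [Real.enorm_eq_ofReal_abs, ENNReal.ofReal_rpow_of_nonneg (abs_nonneg _) (by norm_num)]
    norm_num [sq_abs]

lemma const_identity {h α : ℝ} (hh : 0 < h) :
    ENNReal.ofReal ((Real.sqrt d * h) ^ ((d:ℝ) + α)) / ENNReal.ofReal (h ^ d)
      = ENNReal.ofReal (Real.sqrt d ^ ((d:ℝ) + α) * h ^ α) := by
  rw [← ENNReal.ofReal_div_of_pos (by positivity)]
  congr 1
  rw [Real.mul_rpow (Real.sqrt_nonneg _) hh.le]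
  have h1 : h ^ ((d:ℝ) + α) = h ^ (d:ℕ) * h ^ α := by
    rw [Real.rpow_add hh, Real.rpow_natCast]
  rw [h1, div_eq_iff (by positivity : (h:ℝ) ^ (d:ℕ) ≠ 0)]
  ring

end Stmt14Aux

open Stmt14Aux Filter

set_option maxHeartbeats 2000000 in
set_option synthInstance.maxHeartbeats 400000 in
/-- Compactness of the embedding `H_Ω(ℝ^d;k) ↪ L²(Ω)` under condition (E_α): every
sequence that is bounded in `H_Ω(ℝ^d;k)` has a subsequence converging in `L²`. -/
theorem stmt_14 (Ω : Set (EuclideanSpace ℝ (Fin d))) (hΩo : IsOpen Ω)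
    (hΩb : Bornology.IsBounded Ω)
    (k : EuclideanSpace ℝ (Fin d) → EuclideanSpace ℝ (Fin d) → ℝ)
    (hk : Measurable (Function.uncurry k)) (hknn : ∀ x y, 0 ≤ k x y)
    (α lam : ℝ) (hα : α ∈ Set.Ioo (0 : ℝ) 2) (hlam : 0 < lam)
    (hE : ∀ u : EuclideanSpace ℝ (Fin d) → ℝ, MemLp u 2 →
      ENNReal.ofReal (lam * α * (2 - α)) *
          (∫⁻ x, ∫⁻ y, ENNReal.ofReal ((u x - u y) ^ 2 * ‖x - y‖ ^ (-(d : ℝ) - α))) ≤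
        energy k u)
    (u : ℕ → EuclideanSpace ℝ (Fin d) → ℝ)
    (hmeas : ∀ n, Measurable (u n)) (hu2 : ∀ n, MemLp (u n) 2)
    (huΩ : ∀ n, ∀ᵐ x ∂(volume : Measure (EuclideanSpace ℝ (Fin d))), x ∉ Ω → u n x = 0)
    (C : ℝ≥0∞) (hC : C < ⊤)
    (hbdd : ∀ n, (∫⁻ x, ENNReal.ofReal ((u n x) ^ 2)) + energy k (u n) ≤ C) :
    ∃ φ : ℕ → ℕ, StrictMono φ ∧ ∃ v : EuclideanSpace ℝ (Fin d) → ℝ, MemLp v 2 ∧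
      Filter.Tendsto (fun n => eLpNorm (fun x => u (φ n) x - v x) 2 volume)
        Filter.atTop (nhds 0) := by
  classical
  obtain ⟨hα0, hα2⟩ := hα
  -- bounded support
  obtain ⟨R₀, hR₀⟩ := hΩb.subset_ball 0
  set R : ℝ := max R₀ 1 with hRdef
  have hΩR : Ω ⊆ Metric.ball 0 R := hR₀.trans (Metric.ball_subset_ball (le_max_left _ _))
  -- Gagliardo seminorm bound
  have hc₀ : 0 < lam * α * (2 - α) := mul_pos (mul_pos hlam hα0) (by linarith)
  set C' : ℝ≥0∞ := C / ENNReal.ofReal (lam * α * (2 - α)) with hC'def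
  have hC'top : C' ≠ ⊤ := (ENNReal.div_lt_top hC.ne (by simp [hc₀])).ne
  have hGle : ∀ n,
      (∫⁻ x, ∫⁻ y, ENNReal.ofReal ((u n x - u n y) ^ 2 * ‖x - y‖ ^ (-(d:ℝ) - α))) ≤ C' := by
    intro n
    rw [hC'def, ENNReal.le_div_iff_mul_le (Or.inl (by simp [hc₀])) (Or.inl ofReal_ne_top),
      mul_comm]
    exact (hE (u n) (hu2 n)).trans (le_add_self.trans (hbdd n))
  have hL2 : ∀ n, (∫⁻ x, ENNReal.ofReal ((u n x) ^ 2)) ≤ C :=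
    fun n => le_self_add.trans (hbdd n)
  -- the sequence in Lp
  set U : ℕ → Lp ℝ 2 (volume : Measure (EuclideanSpace ℝ (Fin d))) :=
    fun n => (hu2 n).toLp (u n) with hUdef
  have hUnorm : ∀ n, ‖U n‖ ≤ (C ^ (1/(2:ℝ))).toReal := by
    intro n
    rw [Lp.norm_def]
    apply ENNReal.toReal_mono (ENNReal.rpow_ne_top_of_nonneg (by norm_num) hC.ne)
    rw [eLpNorm_congr_ae (hu2 n).coeFn_toLp, eLpNorm_two_eq]
    exact ENNReal.rpow_le_rpow (hL2 n) (by norm_num)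
  -- total boundedness
  have htb : TotallyBounded (Set.range U) := by
    rw [Metric.totallyBounded_iff]
    intro ε hε
    set η : ℝ := ε / 4 with hηdef
    have hη : 0 < η := by rw [hηdef]; linarith
    set c₁ : ℝ := Real.sqrt d ^ ((d:ℝ) + α) with hc₁def
    have hc₁ : 0 ≤ c₁ := Real.rpow_nonneg (Real.sqrt_nonneg _) _
    -- choose the mesh size h
    obtain ⟨h, hh, hB⟩ : ∃ h : ℝ, 0 < h ∧
        ENNReal.ofReal (c₁ * h ^ α) * C' ≤ ENNReal.ofReal η ^ 2 := by
      set M : ℝ := C'.toReal with hMdef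
      have hM : 0 ≤ M := ENNReal.toReal_nonneg
      have hC'eq : C' = ENNReal.ofReal M := (ENNReal.ofReal_toReal hC'top).symm
      set β : ℝ := η ^ 2 / (c₁ * M + 1) with hβdef
      have hβ : 0 < β := by positivity
      refine ⟨β ^ (α⁻¹), Real.rpow_pos_of_pos hβ _, ?_⟩
      have hpow : (β ^ (α⁻¹)) ^ α = β := by
        rw [← Real.rpow_mul hβ.le, inv_mul_cancel₀ hα0.ne', Real.rpow_one]
      rw [hpow, hC'eq, ← ENNReal.ofReal_mul (by positivity),
        ← ENNReal.ofReal_pow hη.le]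
      apply ENNReal.ofReal_le_ofReal
      have hden : (0:ℝ) < c₁ * M + 1 := by positivity
      have heq : c₁ * β * M = c₁ * M * η ^ 2 / (c₁ * M + 1) := by
        rw [hβdef]; ring
      rw [heq, div_le_iff₀ hden]
      nlinarith [sq_nonneg η, mul_nonneg hc₁ hM]
    -- error estimates
    have herr : ∀ n, eLpNorm (fun x => u n x - approx h (u n) x) 2 volume
        ≤ ENNReal.ofReal η := by
      intro n
      rw [eLpNorm_two_eq]
      have h1 : (∫⁻ x, ENNReal.ofReal ((u n x - approx h (u n) x) ^ 2))
          ≤ ENNReal.ofReal (c₁ * h ^ α) *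
            (∫⁻ x, ∫⁻ y, ENNReal.ofReal ((u n x - u n y) ^ 2 * ‖x - y‖ ^ (-(d:ℝ) - α))) := by
        have := approx_error (α := α) hh hα0 (hmeas n) (hu2 n)
        rwa [const_identity hh] at this
      have h2 : (∫⁻ x, ENNReal.ofReal ((u n x - approx h (u n) x) ^ 2))
          ≤ ENNReal.ofReal η ^ 2 :=
        h1.trans ((mul_le_mul_right (hGle n) _).trans hB)
      calc (∫⁻ x, ENNReal.ofReal ((u n x - approx h (u n) x) ^ 2)) ^ (1/(2:ℝ))
          ≤ (ENNReal.ofReal η ^ 2) ^ (1/(2:ℝ)) := ENNReal.rpow_le_rpow h2 (by norm_num)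
        _ = ENNReal.ofReal η := by
            rw [← ENNReal.rpow_natCast (ENNReal.ofReal η) 2, ← ENNReal.rpow_mul]
            norm_num
    -- the approximations as Lp elements
    have hz0 : ∀ n, ∀ z ∉ idxSet (d := d) h R, (∫ y in cell h z, u n y) = 0 :=
      fun n z hz => setIntegral_cell_eq_zero hh hΩR (huΩ n) hz
    set A : ℕ → Lp ℝ 2 (volume : Measure (EuclideanSpace ℝ (Fin d))) :=
      fun n => (memℒp_approx hh (hz0 n)).toLp (approx h (u n)) with hAdef
    have hdistUA : ∀ n, dist (U n) (A n) ≤ η := by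
      intro n
      rw [dist_edist]
      apply ENNReal.toReal_le_of_le_ofReal hη.le
      rw [Lp.edist_def]
      have hcongr : (⇑(U n) - ⇑(A n) : EuclideanSpace ℝ (Fin d) → ℝ)
          =ᵐ[volume] fun x => u n x - approx h (u n) x := by
        filter_upwards [(hu2 n).coeFn_toLp, (memℒp_approx hh (hz0 n)).coeFn_toLp]
          with x hx1 hx2
        simp only [Pi.sub_apply, hUdef, hAdef] at *
        rw [hx1, hx2]
      rw [eLpNorm_congr_ae hcongr]
      exact herr n
    -- finite-dimensional subspace
    set gen : (Fin d → ℤ) → Lp ℝ 2 (volume : Measure (EuclideanSpace ℝ (Fin d))) :=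
      fun z => indicatorConstLp 2 (measurableSet_cell h z)
        (by rw [volume_cell hh]; exact ofReal_ne_top) (1:ℝ) with hgendef
    set S : Submodule ℝ (Lp ℝ 2 (volume : Measure (EuclideanSpace ℝ (Fin d)))) :=
      Submodule.span ℝ (((idxSet (d := d) h R).image gen : Finset _) : Set _) with hSdef
    haveI : FiniteDimensional ℝ S := FiniteDimensional.span_finset ℝ _
    have hAS : ∀ n, A n ∈ S := by
      intro n
      have hrep : A n = ∑ z ∈ idxSet (d := d) h R,
          ((∫ y in cell h z, u n y) / h ^ d) • gen z := by
        apply Lp.ext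
        have h3 : ∀ᵐ x ∂(volume : Measure (EuclideanSpace ℝ (Fin d))),
            ∀ z ∈ idxSet (d := d) h R,
              (((∫ y in cell h z, u n y) / h ^ d) • gen z : Lp ℝ 2 volume) x
                = (cell h z).indicator (fun _ => (∫ y in cell h z, u n y) / h ^ d) x := by
          rw [eventually_all_finset]
          intro z hz
          filter_upwards [Lp.coeFn_smul ((∫ y in cell h z, u n y) / h ^ d) (gen z),
            indicatorConstLp_coeFn (p := 2) (hs := measurableSet_cell h z)
              (hμs := by rw [volume_cell hh]; exact ofReal_ne_top) (c := (1:ℝ))]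
            with x hx1 hx2
          rw [hx1, Pi.smul_apply, hgendef] at *
          rw [hx2]
          by_cases hxz : x ∈ cell h z <;> simp [Set.indicator, hxz]
        filter_upwards [(memℒp_approx hh (hz0 n)).coeFn_toLp,
          coeFn_sum' (fun z => ((∫ y in cell h z, u n y) / h ^ d) • gen z)
            (idxSet (d := d) h R), h3] with x hx1 hx2 hx3
        rw [hAdef] at *
        rw [hx1, hx2, approx_eq_sum hh (hz0 n) x]
        exact Finset.sum_congr rfl fun z hz => (hx3 z hz).symm
      rw [hrep]
      exact Submodule.sum_mem _ fun z hz => Submodule.smul_mem _ _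
        (Submodule.subset_span (Finset.mem_coe.2 (Finset.mem_image_of_mem gen hz)))
    -- compactness of a ball in S
    set M₀ : ℝ := (C ^ (1/(2:ℝ))).toReal + η with hM₀def
    have hAnorm : ∀ n, ‖A n‖ ≤ M₀ := by
      intro n
      calc ‖A n‖ = dist (A n) 0 := by rw [dist_zero_right]
        _ ≤ dist (A n) (U n) + dist (U n) 0 := dist_triangle _ _ _
        _ ≤ η + (C ^ (1/(2:ℝ))).toReal := by
            rw [dist_comm (A n) (U n)]
            exact add_le_add (hdistUA n) (by rw [dist_zero_right]; exact hUnorm n)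
        _ = M₀ := by rw [hM₀def]; ring
    haveI : ProperSpace S := FiniteDimensional.proper ℝ S
    have hK₀ : IsCompact ((Subtype.val '' (Metric.closedBall (0:S) M₀)) :
        Set (Lp ℝ 2 (volume : Measure (EuclideanSpace ℝ (Fin d))))) :=
      (isCompact_closedBall (0:S) M₀).image continuous_subtype_val
    obtain ⟨t, htfin, hcov⟩ := Metric.totallyBounded_iff.1 hK₀.totallyBounded (ε/2)
      (by linarith)
    refine ⟨t, htfin, ?_⟩
    rintro x ⟨n, rfl⟩
    have hAn : A n ∈ Subtype.val '' (Metric.closedBall (0:S) M₀) := by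
      refine ⟨⟨A n, hAS n⟩, ?_, rfl⟩
      rw [Metric.mem_closedBall, dist_zero_right]
      rw [show ‖(⟨A n, hAS n⟩ : S)‖ = ‖A n‖ from rfl]
      exact hAnorm n
    obtain ⟨y, hyt, hy⟩ := Set.mem_iUnion₂.1 (hcov hAn)
    apply Set.mem_iUnion₂.2 ⟨y, hyt, ?_⟩
    rw [Metric.mem_ball] at hy ⊢
    calc dist (U n) y ≤ dist (U n) (A n) + dist (A n) y := dist_triangle _ _ _
      _ < η + ε/2 := add_lt_add_of_le_of_lt (hdistUA n) hy
      _ < ε := by rw [hηdef]; linarith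
  -- extract convergent subsequence
  have hcomp : IsCompact (closure (Set.range U)) :=
    TotallyBounded.isCompact_of_isClosed htb.closure isClosed_closure
  obtain ⟨V, hVmem, φ, hφ, hconv⟩ :=
    hcomp.isSeqCompact (fun n => subset_closure (Set.mem_range_self n))
  refine ⟨φ, hφ, ⇑V, Lp.memLp V, ?_⟩
  have heq : ∀ n, eLpNorm (fun x => u (φ n) x - V x) 2 volume = edist (U (φ n)) V := by
    intro n
    rw [Lp.edist_def]
    apply eLpNorm_congr_ae
    filter_upwards [(hu2 (φ n)).coeFn_toLp] with x hx
    rw [Pi.sub_apply, hUdef, hx]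
  simp only [heq]
  have hd : Tendsto (fun n => dist (U (φ n)) V) atTop (nhds 0) :=
    tendsto_iff_dist_tendsto_zero.1 hconv
  have := ENNReal.tendsto_ofReal hd
  rw [ENNReal.ofReal_zero] at this
  simpa [edist_dist] using this
end

section
/- Let b, α: ℝ^d → ℝ with c₁ ≤ b ≤ c₂ for constants 0 < c₁ ≤ c₂, α₁ ≤ α ≤ α₂ with 0 < α₁ ≤ α₂ < 2, α Hölder continuous with [α]_{C^{0,β}} ≤ C_H for some β ∈ (0,1). Fix R > 1 and define k'(x,y) = b(x)|x−y|^{−d−α(x)}·1_{B_R}(x−y), with symmetric part k'_s and antisymmetric part k'_a. Then there exists Θ < 1 (depending on c₁, c₂, C_H, β, α₁, α₂, R) such that |k'_a(x,y)| ≤ Θ·k'_s(x,y) for all x ≠ y with |x−y| < R. -/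
private lemma aux_key {r β C_H Δ : ℝ} (hr : 0 < r) (hβ : 0 < β) (h1 : r ≤ 1)
    (hC : 0 < C_H) (hΔ : |Δ| ≤ C_H * r ^ β) : Δ * Real.log r ≤ C_H / β := by
  have hlog : Real.log r ≤ 0 := Real.log_nonpos hr.le h1
  have hrβ : 0 < r ^ β := Real.rpow_pos_of_pos hr β
  have hlogpow : Real.log (r ^ β) = β * Real.log r := Real.log_rpow hr β
  have hu : r ^ β * (-Real.log (r ^ β)) ≤ 1 := by
    have hinv : Real.log ((r ^ β)⁻¹) ≤ (r ^ β)⁻¹ - 1 :=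
      Real.log_le_sub_one_of_pos (by positivity)
    rw [Real.log_inv] at hinv
    have h2 : r ^ β * (-Real.log (r ^ β)) ≤ r ^ β * ((r ^ β)⁻¹ - 1) :=
      mul_le_mul_of_nonneg_left hinv hrβ.le
    have h3 : r ^ β * (r ^ β)⁻¹ = 1 := mul_inv_cancel₀ (ne_of_gt hrβ)
    nlinarith
  have hneg : r ^ β * (-Real.log r) ≤ 1 / β := by
    rw [hlogpow] at hu
    rw [le_div_iff₀ hβ]
    nlinarith
  have step1 : Δ * Real.log r ≤ |Δ| * (-Real.log r) := by
    have := neg_abs_le Δ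
    nlinarith [abs_nonneg Δ]
  have step2 : |Δ| * (-Real.log r) ≤ C_H * (r ^ β * (-Real.log r)) := by
    have hnl : 0 ≤ -Real.log r := by linarith
    nlinarith [abs_nonneg Δ]
  have step3 : C_H * (r ^ β * (-Real.log r)) ≤ C_H * (1 / β) :=
    mul_le_mul_of_nonneg_left hneg hC.le
  have heq : C_H * (1 / β) = C_H / β := by ring
  linarith


/-- Example `schilling`: for `k'(x,y) = b(x)|x−y|^{−d−α(x)}·1_{B_R}(x−y)` with
`0 < c₁ ≤ b ≤ c₂`, `0 < α₁ ≤ α ≤ α₂ < 2` and `α` Hölder continuous, there is `Θ < 1`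
with `|k'_a(x,y)| ≤ Θ·k'_s(x,y)` for all `x ≠ y` with `|x−y| < R`. -/
theorem stmt_16 {d : ℕ} (hd : 0 < d)
    (b α : EuclideanSpace ℝ (Fin d) → ℝ)
    (c₁ c₂ : ℝ) (hc₁ : 0 < c₁) (hc₁₂ : c₁ ≤ c₂)
    (hb : ∀ x, c₁ ≤ b x ∧ b x ≤ c₂)
    (α₁ α₂ : ℝ) (hα₁ : 0 < α₁) (hα₂ : α₂ < 2) (hα₁₂ : α₁ ≤ α₂)
    (hα : ∀ x, α₁ ≤ α x ∧ α x ≤ α₂)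
    (β C_H : ℝ) (hβ : β ∈ Set.Ioo (0 : ℝ) 1) (hCH : 0 < C_H)
    (hHold : ∀ x y, |α x - α y| ≤ C_H * ‖x - y‖ ^ β)
    (R : ℝ) (hR : 1 < R) :
    ∃ Θ < (1 : ℝ), ∀ x y : EuclideanSpace ℝ (Fin d), x ≠ y → ‖x - y‖ < R →
      |(b x * ‖x - y‖ ^ (-(d : ℝ) - α x) - b y * ‖x - y‖ ^ (-(d : ℝ) - α y)) / 2| ≤
        Θ * ((b x * ‖x - y‖ ^ (-(d : ℝ) - α x) + b y * ‖x - y‖ ^ (-(d : ℝ) - α y)) / 2) := by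
  obtain ⟨hβ0, hβ1⟩ := hβ
  obtain ⟨L, hLdef⟩ : ∃ L : ℝ, L = C_H / β + (α₂ - α₁) * Real.log R := ⟨_, rfl⟩
  have hlogR : 0 ≤ Real.log R := Real.log_nonneg hR.le
  have hL0 : 0 ≤ L := by
    have h1 : 0 ≤ C_H / β := le_of_lt (div_pos hCH hβ0)
    have h2 : 0 ≤ (α₂ - α₁) * Real.log R := mul_nonneg (by linarith) hlogR
    linarith
  obtain ⟨M, hMdef⟩ : ∃ M : ℝ, M = (c₂ / c₁) * Real.exp L := ⟨_, rfl⟩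
  have hM1 : 1 ≤ M := by
    have h1 : (1 : ℝ) ≤ c₂ / c₁ := (one_le_div hc₁).mpr hc₁₂
    have h2 : (1 : ℝ) ≤ Real.exp L := Real.one_le_exp hL0
    rw [hMdef]
    calc (1 : ℝ) = 1 * 1 := by ring
    _ ≤ (c₂ / c₁) * Real.exp L := mul_le_mul h1 h2 (by norm_num) (by linarith)
  refine ⟨(M - 1) / (M + 1), ?_, ?_⟩
  · rw [div_lt_one (by linarith)]; linarith
  intro x y hxy hrR
  have hr0' : 0 < ‖x - y‖ := by
    rw [norm_pos_iff]
    exact sub_ne_zero_of_ne hxy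
  have hHxy : |α x - α y| ≤ C_H * ‖x - y‖ ^ β := hHold x y
  obtain ⟨r, hrdef⟩ : ∃ r : ℝ, r = ‖x - y‖ := ⟨_, rfl⟩
  rw [← hrdef] at hrR hHxy ⊢
  have hr0 : 0 < r := hrdef ▸ hr0'
  -- key exponent bound
  have key : ∀ s t : ℝ, |s - t| ≤ C_H * r ^ β → α₁ ≤ s → s ≤ α₂ →
      α₁ ≤ t → t ≤ α₂ → (t - s) * Real.log r ≤ L := by
    intro s t hst hs1 hs2 ht1 ht2
    rcases le_or_gt r 1 with h1 | h1
    · have habs : |t - s| ≤ C_H * r ^ β := by rwa [abs_sub_comm]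
      have hmain := aux_key hr0 hβ0 h1 hCH habs
      have h2 : 0 ≤ (α₂ - α₁) * Real.log R := mul_nonneg (by linarith) hlogR
      linarith
    · have hlog : 0 ≤ Real.log r := Real.log_nonneg h1.le
      have hlogle : Real.log r ≤ Real.log R := Real.log_le_log hr0 hrR.le
      have h2 : (t - s) * Real.log r ≤ (α₂ - α₁) * Real.log r :=
        mul_le_mul_of_nonneg_right (by linarith) hlog
      have h3 : (α₂ - α₁) * Real.log r ≤ (α₂ - α₁) * Real.log R :=
        mul_le_mul_of_nonneg_left hlogle (by linarith)
      have h4 : 0 ≤ C_H / β := le_of_lt (div_pos hCH hβ0)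
      linarith
  have expo : ∀ s t : ℝ, (t - s) * Real.log r ≤ L →
      r ^ (-(d : ℝ) - s) ≤ Real.exp L * r ^ (-(d : ℝ) - t) := by
    intro s t h
    have hexpeq : -(d : ℝ) - s = (t - s) + (-(d : ℝ) - t) := by ring
    rw [hexpeq, Real.rpow_add hr0]
    have h1 : r ^ (t - s) ≤ Real.exp L := by
      rw [Real.rpow_def_of_pos hr0]
      exact Real.exp_le_exp.mpr (by rw [mul_comm] at h; exact h)
    exact mul_le_mul_of_nonneg_right h1 (Real.rpow_pos_of_pos hr0 _).le
  have hax := hα x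
  have hay := hα y
  have hbx := hb x
  have hby := hb y
  obtain ⟨u, hudef⟩ : ∃ u : ℝ, u = b x * r ^ (-(d : ℝ) - α x) := ⟨_, rfl⟩
  obtain ⟨v, hvdef⟩ : ∃ v : ℝ, v = b y * r ^ (-(d : ℝ) - α y) := ⟨_, rfl⟩
  have hpx : 0 < r ^ (-(d : ℝ) - α x) := Real.rpow_pos_of_pos hr0 _
  have hpy : 0 < r ^ (-(d : ℝ) - α y) := Real.rpow_pos_of_pos hr0 _
  have hu0 : 0 < u := hudef ▸ mul_pos (lt_of_lt_of_le hc₁ hbx.1) hpx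
  have hv0 : 0 < v := hvdef ▸ mul_pos (lt_of_lt_of_le hc₁ hby.1) hpy
  have hexp0 : 0 < Real.exp L := Real.exp_pos L
  have huv : u ≤ M * v := by
    have hk := key (α x) (α y) hHxy hax.1 hax.2 hay.1 hay.2
    have he := expo (α x) (α y) hk
    rw [hudef, hvdef]
    calc b x * r ^ (-(d : ℝ) - α x) ≤ c₂ * (Real.exp L * r ^ (-(d : ℝ) - α y)) := by
          have := mul_le_mul hbx.2 he hpx.le (by linarith)
          linarith
    _ = (c₂ / c₁) * Real.exp L * (c₁ * r ^ (-(d : ℝ) - α y)) := by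
          field_simp
    _ ≤ (c₂ / c₁) * Real.exp L * (b y * r ^ (-(d : ℝ) - α y)) := by
          apply mul_le_mul_of_nonneg_left
          · exact mul_le_mul_of_nonneg_right hby.1 hpy.le
          · exact le_of_lt (mul_pos (div_pos (lt_of_lt_of_le hc₁ hc₁₂) hc₁) hexp0)
    _ = M * (b y * r ^ (-(d : ℝ) - α y)) := by rw [hMdef]
  have hvu : v ≤ M * u := by
    have hk := key (α y) (α x) (by rw [abs_sub_comm]; exact hHxy) hay.1 hay.2 hax.1 hax.2
    have he := expo (α y) (α x) hk
    rw [hudef, hvdef]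
    calc b y * r ^ (-(d : ℝ) - α y) ≤ c₂ * (Real.exp L * r ^ (-(d : ℝ) - α x)) := by
          have := mul_le_mul hby.2 he hpy.le (by linarith)
          linarith
    _ = (c₂ / c₁) * Real.exp L * (c₁ * r ^ (-(d : ℝ) - α x)) := by
          field_simp
    _ ≤ (c₂ / c₁) * Real.exp L * (b x * r ^ (-(d : ℝ) - α x)) := by
          apply mul_le_mul_of_nonneg_left
          · exact mul_le_mul_of_nonneg_right hbx.1 hpx.le
          · exact le_of_lt (mul_pos (div_pos (lt_of_lt_of_le hc₁ hc₁₂) hc₁) hexp0)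
    _ = M * (b x * r ^ (-(d : ℝ) - α x)) := by rw [hMdef]
  have hMp : (0 : ℝ) < M + 1 := by linarith
  have hΘeq : (M - 1) / (M + 1) * (M + 1) = M - 1 := div_mul_cancel₀ _ (ne_of_gt hMp)
  have hmain : |u - v| ≤ (M - 1) / (M + 1) * (u + v) := by
    rw [abs_sub_le_iff]
    constructor
    · nlinarith [mul_pos hu0 hv0]
    · nlinarith [mul_pos hu0 hv0]
  rw [← hudef, ← hvdef]
  calc |(u - v) / 2| = |u - v| / 2 := by rw [abs_div]; norm_num
  _ ≤ (M - 1) / (M + 1) * (u + v) / 2 := by linarith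
  _ = (M - 1) / (M + 1) * ((u + v) / 2) := by ring
end
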